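/- arXiv:2005.13043 — 5 statements merged into one kernel-verified Lean document; each statement's English description precedes it below -/
import Mathlib

section
/- Let X = (p_1,…,p_k), k ≥ 1, be a list of pairwise non-proportional nonzero vectors in ℝ³. Then α̂(X) ≥ 1; moreover α̂(X) = 1 if and only if there exists a nonzero linear form λ ∈ ℝ[x,y,z] with λ(p_i) = 0 for every i (i.e., the corresponding points of P² are collinear), and if no such λ exists then α̂(X) ≥ 3/2. -/
open MvPolynomial

noncomputable section

/-- The polynomial ring `S = ℝ[x,y,z]`. -/
abbrev S3 : Type := MvPolynomial (Fin 3) ℝ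

/-- The linear form with coefficient vector `p`, i.e. `p 0 • x + p 1 • y + p 2 • z`;
`p` is the dual point of this linear form. -/
def linForm (p : Fin 3 → ℝ) : S3 := ∑ i, MvPolynomial.C (p i) * MvPolynomial.X i

/-- Iterated partial derivative along a list of coordinate directions, as a linear map. -/
def diffOp (L : List (Fin 3)) : S3 →ₗ[ℝ] S3 :=
  L.foldr (fun i f => (MvPolynomial.pderiv (R := ℝ) i).toLinearMap ∘ₗ f) LinearMap.id

/-- `F` vanishes to order `≥ s` at the point `p`: every iterated partial derivative of
total order at most `s - 1` vanishes at `p`. -/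
def VanishesToOrder (F : S3) (p : Fin 3 → ℝ) (s : ℕ) : Prop :=
  ∀ L : List (Fin 3), L.length < s → MvPolynomial.eval p (diffOp L F) = 0

/-- The subspace of polynomials vanishing to order `≥ s` at `p`. -/
def vanishSubmodule (p : Fin 3 → ℝ) (s : ℕ) : Submodule ℝ S3 :=
  ⨅ L ∈ {L : List (Fin 3) | L.length < s},
    LinearMap.ker ((MvPolynomial.aeval p).toLinearMap ∘ₗ diffOp L)

/-- Dimension of the degree-`d` graded piece of an ideal of `S`. -/
def idealDim (I : Ideal S3) (d : ℕ) : ℕ :=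
  Module.finrank ℝ
    ↥(I.restrictScalars ℝ ⊓ MvPolynomial.homogeneousSubmodule (Fin 3) ℝ d)

/-- Dimension of the space of degree-`d` homogeneous polynomials vanishing to order
`≥ m i` at each point `p i`. -/
def fatDim {k : ℕ} (p : Fin k → (Fin 3 → ℝ)) (m : Fin k → ℕ) (d : ℕ) : ℕ :=
  Module.finrank ℝ
    ↥(MvPolynomial.homogeneousSubmodule (Fin 3) ℝ d ⊓ ⨅ i, vanishSubmodule (p i) (m i))

/-- A list of vectors of `ℝ³` is pairwise non-proportional and nonzero. -/
def PairwiseNonProp {k : ℕ} (p : Fin k → (Fin 3 → ℝ)) : Prop :=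
  (∀ i, p i ≠ 0) ∧ ∀ i j, i ≠ j → ∀ c : ℝ, p j ≠ c • p i

/-- `α_s(X)`: least degree of a nonzero homogeneous polynomial vanishing to order `≥ s`
at every point of the list `X`. -/
def alphaDeg {k : ℕ} (p : Fin k → (Fin 3 → ℝ)) (s : ℕ) : ℕ :=
  sInf {d : ℕ | ∃ F : S3, F ≠ 0 ∧ F.IsHomogeneous d ∧ ∀ i, VanishesToOrder F (p i) s}

/-- The Waldschmidt constant `α̂(X) = inf { α_s(X)/s : s ≥ 1 }`. -/
def waldschmidt {k : ℕ} (p : Fin k → (Fin 3 → ℝ)) : ℝ :=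
  sInf {x : ℝ | ∃ s : ℕ, 1 ≤ s ∧ x = (alphaDeg p s : ℝ) / (s : ℝ)}

/-- Integer binomial coefficient `C(m, 2)`, zero for `m < 2`. -/
def choose2 (m : ℤ) : ℤ := if m < 2 then 0 else m * (m - 1) / 2

lemma diffOp_cons (i : Fin 3) (L : List (Fin 3)) :
    diffOp (i :: L) = (pderiv (R := ℝ) i).toLinearMap ∘ₗ diffOp L := rfl
lemma diffOp_append (L1 L2 : List (Fin 3)) :
    diffOp (L1 ++ L2) = diffOp L1 ∘ₗ diffOp L2 := by
  induction L1 with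
  | nil => rfl
  | cons i L ih => simp [List.cons_append, diffOp_cons, ih, LinearMap.comp_assoc]

lemma vto_mono {F : S3} {p : Fin 3 → ℝ} {s s' : ℕ} (h : VanishesToOrder F p s)
    (hs : s' ≤ s) : VanishesToOrder F p s' := fun L hL => h L (lt_of_lt_of_le hL hs)

lemma vto_pderiv {F : S3} {p : Fin 3 → ℝ} {s : ℕ} (h : VanishesToOrder F p (s+1))
    (i : Fin 3) : VanishesToOrder (pderiv i F) p s := by
  intro L hL
  have : MvPolynomial.eval p (diffOp (L ++ [i]) F) = 0 := h _ (by simpa using hL)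
  rwa [diffOp_append, LinearMap.comp_apply] at this

lemma vto_mul {F G : S3} {p : Fin 3 → ℝ} {a b : ℕ}
    (hF : VanishesToOrder F p a) (hG : VanishesToOrder G p b) :
    VanishesToOrder (F * G) p (a + b) := by
  intro L
  induction L using List.reverseRecOn generalizing F G a b with
  | nil =>
    intro h0
    simp only [diffOp, List.foldr_nil, LinearMap.id_coe, id_eq, map_mul]
    rcases Nat.eq_zero_or_pos a with ha | ha
    · have : MvPolynomial.eval p G = 0 := hG [] (by simp only [List.length_nil]; omega)
      simp [this]
    · have : MvPolynomial.eval p F = 0 := hF [] (by simp only [List.length_nil]; omega)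
      simp [this]
  | append_singleton L' i ih =>
    intro hlen
    rw [diffOp_append, LinearMap.comp_apply]
    have : diffOp [i] (F * G) = F * pderiv i G + pderiv i F * G := by
      simp [diffOp, pderiv_mul]; ring
    rw [this, map_add, map_add]
    have h1 : MvPolynomial.eval p (diffOp L' (F * pderiv i G)) = 0 := by
      rcases Nat.eq_zero_or_pos b with hb | hb
      · subst hb
        exact ih hF (fun L hL => absurd hL (Nat.not_lt_zero _)) (by simp at hlen; omega)
      · have := vto_pderiv (s := b - 1) (by simpa [Nat.sub_add_cancel hb] using hG) i
        exact ih hF this (by simp at hlen; omega)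
    have h2 : MvPolynomial.eval p (diffOp L' (pderiv i F * G)) = 0 := by
      rcases Nat.eq_zero_or_pos a with ha | ha
      · subst ha
        exact ih (fun L hL => absurd hL (Nat.not_lt_zero _)) hG (by simp at hlen; omega)
      · have := vto_pderiv (s := a - 1) (by simpa [Nat.sub_add_cancel ha] using hF) i
        exact ih this hG (by simp at hlen; omega)
    rw [h1, h2, add_zero]

lemma vto_pow {l : S3} {p : Fin 3 → ℝ} (hl : MvPolynomial.eval p l = 0) (s : ℕ) :
    VanishesToOrder (l ^ s) p s := by
  induction s with
  | zero => intro L hL; omega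
  | succ n ih =>
    have h1 : VanishesToOrder l p 1 := by
      intro L hL
      have : L = [] := List.length_eq_zero_iff.mp (by omega)
      simpa [this, diffOp] using hl
    have := vto_mul ih h1
    rw [pow_succ]
    exact this

lemma diffOp_replicate (n : ℕ) (i : Fin 3) (F : S3) :
    diffOp (List.replicate n i) F = (fun G => pderiv i G)^[n] F := by
  induction n generalizing F with
  | zero => rfl
  | succ n ih =>
    rw [List.replicate_succ, diffOp_cons]
    simp only [LinearMap.comp_apply, Function.iterate_succ']
    rw [ih]
    simp [Function.iterate_succ_apply']

lemma pderiv_iterate_monomial (i : Fin 3) (n : ℕ) (m : Fin 3 →₀ ℕ) (c : ℝ) :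
    (fun G => pderiv i G)^[n] (monomial m c)
      = monomial (m - Finsupp.single i n) (c * (m i).descFactorial n) := by
  induction n with
  | zero => simp
  | succ n ih =>
    rw [Function.iterate_succ_apply', ih, pderiv_monomial]
    have h0 : m - Finsupp.single i n - Finsupp.single i 1 = m - Finsupp.single i (n+1) := by
      ext j
      simp only [Finsupp.coe_tsub, Pi.sub_apply, Finsupp.single_apply]
      split <;> omega
    have h1 : (m - Finsupp.single i n) i = m i - n := by simp
    rw [h0, h1, Nat.descFactorial_succ]
    congr 1
    push_cast
    ring

lemma homog_degree_eq {g : S3} {d : ℕ} (hg : g.IsHomogeneous d) {m : Fin 3 →₀ ℕ}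
    (hm : m ∈ g.support) : m 0 + m 1 + m 2 = d := by
  have h := hg (mem_support_iff.mp hm)
  rw [Finsupp.weight_apply] at h
  simp only [Pi.one_apply, smul_eq_mul, mul_one] at h
  have h2 : ∑ i ∈ Finset.univ, m i = d := by
    rw [← h]
    exact (Finset.sum_subset (Finset.subset_univ _) (by
      intro x _ hx
      simpa using Finsupp.notMem_support_iff.mp hx)).symm
  simpa [Fin.sum_univ_three] using h2

-- the main computational lemma, shared: eval of double-replicate derivative
lemma eval_diffOp_two (g : S3) (t1 t2 : Fin 3) (β γ : ℕ) (x : Fin 3 → ℝ) :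
    MvPolynomial.eval x (diffOp (List.replicate β t1 ++ List.replicate γ t2) g)
    = ∑ m ∈ g.support,
        (coeff m g * ((m t2).descFactorial γ) * (((m - Finsupp.single t2 γ) t1).descFactorial β))
          * ∏ j, x j ^ ((m - Finsupp.single t2 γ - Finsupp.single t1 β) j) := by
  conv_lhs => rw [← support_sum_monomial_coeff g]
  rw [map_sum, map_sum]
  refine Finset.sum_congr rfl (fun m hm => ?_)
  rw [diffOp_append, LinearMap.comp_apply, diffOp_replicate γ t2, pderiv_iterate_monomial,
    diffOp_replicate, pderiv_iterate_monomial, eval_monomial]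
  rw [Finsupp.prod_fintype _ _ (fun j => pow_zero (x j))]



lemma triple_cover : ∀ t t1 t2 j : Fin 3, t1 ≠ t2 → t ≠ t1 → t ≠ t2 →
    (j = t ∨ j = t1 ∨ j = t2) := by decide

lemma sum_triple (t t1 t2 : Fin 3) (h12 : t1 ≠ t2) (h01 : t ≠ t1) (h02 : t ≠ t2)
    (ν : Fin 3 →₀ ℕ) : ν 0 + ν 1 + ν 2 = ν t + ν t1 + ν t2 := by
  fin_cases t <;> fin_cases t1 <;> fin_cases t2 <;> simp_all <;> ring

lemma support_coord_bound {g : S3} {d s : ℕ} {t t1 t2 : Fin 3}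
    (h12 : t1 ≠ t2) (h01 : t ≠ t1) (h02 : t ≠ t2)
    (hg : g.IsHomogeneous d)
    (hv : VanishesToOrder g (fun j => if j = t then 1 else 0) s)
    {m : Fin 3 →₀ ℕ} (hm : m ∈ g.support) : s ≤ m t1 + m t2 := by
  by_contra hcon
  push_neg at hcon
  set e : Fin 3 → ℝ := fun j => if j = t then 1 else 0 with he
  have h0 := hv (List.replicate (m t1) t1 ++ List.replicate (m t2) t2)
    (by simp only [List.length_append, List.length_replicate]; omega)
  rw [eval_diffOp_two] at h0
  have hn21 : ¬ (t2 = t1) := fun hh => h12 hh.symm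
  have hnt2 : ¬ (t2 = t) := fun hh => h02 hh.symm
  have hnt1 : ¬ (t1 = t) := fun hh => h01 hh.symm
  have hsub1 : ∀ m' : Fin 3 →₀ ℕ, (m' - Finsupp.single t2 (m t2)) t1 = m' t1 := by
    intro m'; simp [Finsupp.single_apply, hn21]
  have key : ∀ m' ∈ g.support, m' ≠ m →
      (coeff m' g * ((m' t2).descFactorial (m t2)) *
        (((m' - Finsupp.single t2 (m t2)) t1).descFactorial (m t1)))
        * ∏ j, e j ^ ((m' - Finsupp.single t2 (m t2) - Finsupp.single t1 (m t1)) j) = 0 := by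
    intro m' hm' hne
    rcases lt_trichotomy (m' t1) (m t1) with h | h | h
    · rw [hsub1, Nat.descFactorial_eq_zero_iff_lt.mpr h]; simp
    · rcases lt_trichotomy (m' t2) (m t2) with h2 | h2 | h2
      · rw [Nat.descFactorial_eq_zero_iff_lt.mpr h2]; simp
      · exfalso
        apply hne
        have hd1 := homog_degree_eq hg hm'
        have hd2 := homog_degree_eq hg hm
        have hsum := sum_triple t t1 t2 h12 h01 h02
        have hmt : m' t = m t := by
          have e1 := hsum m'; have e2 := hsum m; omega
        ext j
        rcases triple_cover t t1 t2 j h12 h01 h02 with rfl|rfl|rfl <;> omega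
      · have hz : ((m' - Finsupp.single t2 (m t2) - Finsupp.single t1 (m t1)) t2) ≠ 0 := by
          simp [Finsupp.single_apply, hn21, h12]
          omega
        have hp : ∏ j, e j ^ ((m' - Finsupp.single t2 (m t2) - Finsupp.single t1 (m t1)) j)
            = 0 := by
          apply Finset.prod_eq_zero (Finset.mem_univ t2)
          have he2 : e t2 = 0 := if_neg hnt2
          rw [he2, zero_pow hz]
        rw [hp]; ring
    · have hz : ((m' - Finsupp.single t2 (m t2) - Finsupp.single t1 (m t1)) t1) ≠ 0 := by
        simp [Finsupp.single_apply, hn21]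
        omega
      have hp : ∏ j, e j ^ ((m' - Finsupp.single t2 (m t2) - Finsupp.single t1 (m t1)) j)
          = 0 := by
        apply Finset.prod_eq_zero (Finset.mem_univ t1)
        have he1 : e t1 = 0 := if_neg hnt1
        rw [he1, zero_pow hz]
      rw [hp]; ring
  rw [Finset.sum_eq_single_of_mem m hm key] at h0
  have hν : ∀ j, (m - Finsupp.single t2 (m t2) - Finsupp.single t1 (m t1)) j
      = if j = t then m t else 0 := by
    intro j
    rcases triple_cover t t1 t2 j h12 h01 h02 with rfl|rfl|rfl <;>
      simp [Finsupp.single_apply, hn21, hnt1, hnt2, h12, h01, h02]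
  have hprod : ∏ j, e j ^ ((m - Finsupp.single t2 (m t2) - Finsupp.single t1 (m t1)) j) = 1 := by
    apply Finset.prod_eq_one
    intro j _
    rw [hν j, he]
    split_ifs with hjt <;> simp [hjt]
  rw [hprod, mul_one, hsub1, Nat.descFactorial_self, Nat.descFactorial_self] at h0
  have hne : coeff m g * ((m t2).factorial : ℝ) * ((m t1).factorial : ℝ) ≠ 0 :=
    mul_ne_zero (mul_ne_zero (mem_support_iff.mp hm)
      (Nat.cast_ne_zero.mpr (Nat.factorial_ne_zero _)))
      (Nat.cast_ne_zero.mpr (Nat.factorial_ne_zero _))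
  exact hne h0

lemma deg_ge {F : S3} {d s : ℕ} {p : Fin 3 → ℝ} (hF : F ≠ 0) (hhom : F.IsHomogeneous d)
    (hv : VanishesToOrder F p s) : s ≤ d := by
  by_contra hcon
  push_neg at hcon
  obtain ⟨m, hm⟩ := (support_nonempty.mpr hF)
  have hd := homog_degree_eq hhom hm
  have h0 := hv (List.replicate (m 0) 0 ++ (List.replicate (m 1) 1 ++ List.replicate (m 2) 2))
    (by simp only [List.length_append, List.length_replicate]; omega)
  rw [diffOp_append, diffOp_append, LinearMap.comp_apply, LinearMap.comp_apply] at h0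
  conv_lhs at h0 => rw [← support_sum_monomial_coeff F]
  rw [map_sum, map_sum, map_sum, map_sum] at h0
  have key : ∀ m' ∈ F.support, m' ≠ m →
      MvPolynomial.eval p ((diffOp (List.replicate (m 0) 0))
        ((diffOp (List.replicate (m 1) 1))
          ((diffOp (List.replicate (m 2) 2)) (monomial m' (coeff m' F))))) = 0 := by
    intro m' hm' hne
    rw [diffOp_replicate (m 2) 2, pderiv_iterate_monomial, diffOp_replicate (m 1) 1,
      pderiv_iterate_monomial, diffOp_replicate (m 0) 0, pderiv_iterate_monomial]
    have hd' := homog_degree_eq hhom hm'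
    have i2 : ((m' - Finsupp.single 2 (m 2) : Fin 3 →₀ ℕ)) 1 = m' 1 := by simp
    have i1 : ((m' - Finsupp.single 2 (m 2) - Finsupp.single 1 (m 1) : Fin 3 →₀ ℕ)) 0 = m' 0 := by simp
    rw [i2, i1]
    have : ∃ j : Fin 3, m' j < m j := by
      by_contra hall
      push_neg at hall
      apply hne
      ext j
      have := hall 0; have := hall 1; have := hall 2
      rcases triple_cover 0 1 2 j (by decide) (by decide) (by decide) with rfl|rfl|rfl <;> omega
    obtain ⟨j, hj⟩ := this
    rcases triple_cover 0 1 2 j (by decide) (by decide) (by decide) with rfl|rfl|rfl <;>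
      rw [Nat.descFactorial_eq_zero_iff_lt.mpr hj] <;> simp
  rw [Finset.sum_eq_single_of_mem m hm key] at h0
  rw [diffOp_replicate (m 2) 2, pderiv_iterate_monomial, diffOp_replicate (m 1) 1,
    pderiv_iterate_monomial, diffOp_replicate (m 0) 0, pderiv_iterate_monomial] at h0
  have i2 : ((m - Finsupp.single 2 (m 2) : Fin 3 →₀ ℕ)) 1 = m 1 := by simp
  have i1 : ((m - Finsupp.single 2 (m 2) - Finsupp.single 1 (m 1) : Fin 3 →₀ ℕ)) 0 = m 0 := by simp
  rw [i2, i1, Nat.descFactorial_self, Nat.descFactorial_self, Nat.descFactorial_self] at h0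
  have hz : m - Finsupp.single 2 (m 2) - Finsupp.single 1 (m 1) - Finsupp.single 0 (m 0) = 0 := by
    ext j
    rcases triple_cover 0 1 2 j (by decide) (by decide) (by decide) with rfl|rfl|rfl <;>
      simp [Finsupp.single_apply]
  rw [hz] at h0
  have : (monomial (0 : Fin 3 →₀ ℕ))
      (coeff m F * ((m 2).factorial : ℝ) * ((m 1).factorial : ℝ) * ((m 0).factorial : ℝ))
      = C (coeff m F * ((m 2).factorial : ℝ) * ((m 1).factorial : ℝ) * ((m 0).factorial : ℝ)) :=
    rfl
  rw [this, eval_C] at h0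
  have hne : coeff m F ≠ 0 := mem_support_iff.mp hm
  exact mul_ne_zero (mul_ne_zero (mul_ne_zero hne
    (Nat.cast_ne_zero.mpr (Nat.factorial_ne_zero _)))
    (Nat.cast_ne_zero.mpr (Nat.factorial_ne_zero _)))
    (Nat.cast_ne_zero.mpr (Nat.factorial_ne_zero _)) h0

/-- directional-derivative-style operator -/
def Dv (v : Fin 3 → ℝ) : S3 →ₗ[ℝ] S3 :=
  ∑ i, (v i) • (pderiv (R := ℝ) i).toLinearMap

lemma Dv_apply (v : Fin 3 → ℝ) (F : S3) : Dv v F = ∑ i, C (v i) * pderiv i F := by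
  simp [Dv, LinearMap.sum_apply, smul_eq_C_mul]

def iterD (vs : List (Fin 3 → ℝ)) : S3 →ₗ[ℝ] S3 :=
  vs.foldr (fun v g => Dv v ∘ₗ g) LinearMap.id

lemma vto_Dv {F : S3} {p : Fin 3 → ℝ} {s : ℕ} (h : VanishesToOrder F p (s+1))
    (v : Fin 3 → ℝ) : VanishesToOrder (Dv v F) p s := by
  intro L hL
  rw [Dv_apply, map_sum, map_sum]
  refine Finset.sum_eq_zero (fun i _ => ?_)
  rw [show C (v i) * pderiv i F = (v i) • (pderiv i F : S3) from (smul_eq_C_mul _ _).symm,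
    map_smul, smul_eq_C_mul, map_mul, eval_C]
  rw [vto_pderiv h i L hL, mul_zero]

lemma vto_order_zero (F : S3) (p : Fin 3 → ℝ) : VanishesToOrder F p 0 :=
  fun _ hL => absurd hL (Nat.not_lt_zero _)

lemma vto_iterD' {F : S3} {p : Fin 3 → ℝ} {s : ℕ} (h : VanishesToOrder F p s)
    (vs : List (Fin 3 → ℝ)) :
    VanishesToOrder (iterD vs F) p (s - vs.length) := by
  induction vs with
  | nil => simpa [iterD] using h
  | cons v vs ih =>
    show VanishesToOrder (Dv v (iterD vs F)) p _
    rcases Nat.eq_zero_or_pos (s - (v :: vs).length) with h0 | h0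
    · rw [h0]; exact vto_order_zero _ _
    · have : s - (v :: vs).length + 1 = s - vs.length := by
        simp only [List.length_cons] at *; omega
      have := vto_Dv (this ▸ ih) v
      exact this

lemma vto_iterD {F : S3} {p : Fin 3 → ℝ} {s : ℕ} (h : VanishesToOrder F p s)
    (vs : List (Fin 3 → ℝ)) (hlen : vs.length < s) :
    MvPolynomial.eval p (iterD vs F) = 0 := by
  have h2 := vto_iterD' h vs [] (by simp; omega)
  simpa [diffOp] using h2

def substF (A : Fin 3 → Fin 3 → ℝ) : Fin 3 → S3 := fun i => ∑ t, C (A t i) * X t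

lemma pderiv_substF (A : Fin 3 → Fin 3 → ℝ) (t i : Fin 3) :
    pderiv t (substF A i) = C (A t i) := by
  rw [substF, map_sum]
  rw [Finset.sum_eq_single t]
  · simp
  · intro b _ hb
    rw [pderiv_mul]
    simp [pderiv_X, Pi.single_apply, Ne.symm hb]
  · simp

lemma Dv_mul_X (v : Fin 3 → ℝ) (F : S3) (j : Fin 3) :
    Dv v (F * X j) = Dv v F * X j + C (v j) * F := by
  rw [Dv_apply, Dv_apply]
  simp only [pderiv_mul, pderiv_X, mul_add, Finset.sum_add_distrib, Finset.sum_mul]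
  congr 1
  · exact Finset.sum_congr rfl (fun i _ => by ring)
  · rw [Finset.sum_eq_single j]
    · simp [Pi.single_apply]
    · intro b _ hb; simp [Pi.single_apply, hb]
    · simp

lemma chain_rule (A : Fin 3 → Fin 3 → ℝ) (t : Fin 3) (F : S3) :
    pderiv t (aeval (substF A) F) = aeval (substF A) (Dv (A t) F) := by
  induction F using MvPolynomial.induction_on with
  | C a => simp [Dv_apply]
  | add F G ihF ihG => simp only [map_add, ihF, ihG]
  | mul_X F j ih =>
    rw [map_mul, aeval_X, pderiv_mul, pderiv_substF, ih, Dv_mul_X, map_add, map_mul, aeval_X,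
      map_mul, aeval_C]
    show _ = _ * _ + C (A t j) * _
    ring

lemma diffOp_aeval (A : Fin 3 → Fin 3 → ℝ) (L : List (Fin 3)) (F : S3) :
    diffOp L (aeval (substF A) F) = aeval (substF A) (iterD (L.map A) F) := by
  induction L generalizing F with
  | nil => rfl
  | cons t L ih =>
    rw [diffOp_cons]
    show pderiv t (diffOp L (aeval (substF A) F)) = _
    rw [ih, chain_rule]
    rfl

lemma eval_aeval' (x : Fin 3 → ℝ) (f : Fin 3 → S3) (F : S3) :
    MvPolynomial.eval x (aeval f F) = MvPolynomial.eval (fun i => MvPolynomial.eval x (f i)) F := by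
  induction F using MvPolynomial.induction_on with
  | C a => simp
  | add F G ihF ihG => simp only [map_add, ihF, ihG]
  | mul_X F j ih => rw [map_mul, map_mul, aeval_X, ih]; rw [map_mul, eval_X]

lemma eval_substF (x : Fin 3 → ℝ) (A : Fin 3 → Fin 3 → ℝ) (i : Fin 3) :
    MvPolynomial.eval x (substF A i) = ∑ t, A t i * x t := by
  simp [substF]

lemma vto_aeval {A : Fin 3 → Fin 3 → ℝ} {F : S3} {s : ℕ} (t : Fin 3)
    (h : VanishesToOrder F (A t) s) :
    VanishesToOrder (aeval (substF A) F) (fun j => if j = t then 1 else 0) s := by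
  intro L hL
  rw [diffOp_aeval, eval_aeval']
  have hx : (fun i => MvPolynomial.eval (fun j => if j = t then (1:ℝ) else 0) (substF A i))
      = A t := by
    funext i
    rw [eval_substF]
    rw [Finset.sum_eq_single t] <;> simp_all
  rw [hx]
  exact vto_iterD h _ (by simpa using hL)

lemma substF_isHomogeneous {A : Fin 3 → Fin 3 → ℝ} (i : Fin 3) :
    (substF A i).IsHomogeneous 1 := by
  apply MvPolynomial.IsHomogeneous.sum
  intro t _
  simpa using (isHomogeneous_C _ (A t i)).mul (isHomogeneous_X ℝ t)

lemma aeval_substF_isHomogeneous {A : Fin 3 → Fin 3 → ℝ} {F : S3} {d : ℕ}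
    (h : F.IsHomogeneous d) : (aeval (substF A) F).IsHomogeneous d := by
  conv_lhs => rw [← support_sum_monomial_coeff F]
  rw [map_sum]
  apply MvPolynomial.IsHomogeneous.sum
  intro m hm
  rw [aeval_monomial]
  have hdeg : ∑ i ∈ m.support, m i = d := by
    have h1 := h (mem_support_iff.mp hm)
    rw [Finsupp.weight_apply] at h1
    simpa [Finsupp.sum] using h1
  have : (m.prod fun i e => (substF A i) ^ e).IsHomogeneous d := by
    rw [Finsupp.prod, ← hdeg]
    exact MvPolynomial.IsHomogeneous.prod _ _ _
      (fun i _ => by simpa using (substF_isHomogeneous (A := A) i).pow (m i))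
  simpa using (isHomogeneous_C _ (coeff m F)).mul this

lemma aeval_substF_comp (A B : Fin 3 → Fin 3 → ℝ)
    (hAB : ∀ i j, ∑ t, A t i * B j t = if i = j then 1 else 0) (F : S3) :
    aeval (substF B) (aeval (substF A) F) = F := by
  have hcomp : ∀ i, aeval (substF B) (substF A i) = X i := by
    intro i
    rw [substF, map_sum]
    have : ∀ t, aeval (substF B) (C (A t i) * X t) = C (A t i) * substF B t := by
      intro t; rw [map_mul, aeval_C, aeval_X]; rfl
    rw [Finset.sum_congr rfl (fun t _ => this t)]
    simp only [substF, Finset.mul_sum]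
    rw [Finset.sum_comm]
    have : ∀ j, ∑ t, C (A t i) * (C (B j t) * X j) = C (∑ t, A t i * B j t) * X j := by
      intro j
      rw [map_sum, Finset.sum_mul]
      exact Finset.sum_congr rfl (fun t _ => by rw [map_mul]; ring)
    rw [Finset.sum_congr rfl (fun j _ => this j)]
    rw [Finset.sum_congr rfl (fun j _ => by rw [hAB i j])]
    simp [apply_ite (C : ℝ → S3)]
  calc aeval (substF B) (aeval (substF A) F)
      = aeval (fun i => aeval (substF B) (substF A i)) F := by
        rw [← AlgHom.comp_apply]
        congr 1
        apply MvPolynomial.algHom_ext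
        intro i
        simp
    _ = F := by
        rw [funext hcomp]
        simp [aeval_X_left]

lemma exists_subst_inverse (A : Fin 3 → Fin 3 → ℝ) (hA : LinearIndependent ℝ A) :
    ∃ B : Fin 3 → Fin 3 → ℝ, ∀ i j, ∑ t, A t i * B j t = if i = j then 1 else 0 := by
  set M : Matrix (Fin 3) (Fin 3) ℝ := Matrix.of A with hM
  have hu : IsUnit M := (Matrix.linearIndependent_rows_iff_isUnit (A := M)).mp hA
  have hut : IsUnit M.transpose := (Matrix.isUnit_transpose (A := M)).mpr hu
  have hdet : IsUnit M.transpose.det := (Matrix.isUnit_iff_isUnit_det _).mp hut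
  refine ⟨fun j t => M.transpose⁻¹ t j, fun i j => ?_⟩
  have := Matrix.mul_nonsing_inv M.transpose hdet
  have h2 := congrArg (fun P => P i j) this
  simp only [Matrix.mul_apply, Matrix.one_apply] at h2
  simpa [Matrix.transpose_apply, hM] using h2

lemma aeval_substF_ne_zero {A : Fin 3 → Fin 3 → ℝ} (hA : LinearIndependent ℝ A) {F : S3}
    (hF : F ≠ 0) : aeval (substF A) F ≠ 0 := by
  obtain ⟨B, hAB⟩ := exists_subst_inverse A hA
  intro h
  apply hF
  rw [← aeval_substF_comp A B hAB F, h, map_zero]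

lemma chudnovsky_bound {F : S3} {d s : ℕ} (hF : F ≠ 0) (hhom : F.IsHomogeneous d)
    (A : Fin 3 → Fin 3 → ℝ) (hA : LinearIndependent ℝ A)
    (hv : ∀ t, VanishesToOrder F (A t) s) : 3 * s ≤ 2 * d := by
  set g : S3 := aeval (substF A) F with hg
  have hg0 : g ≠ 0 := aeval_substF_ne_zero hA hF
  have hghom : g.IsHomogeneous d := aeval_substF_isHomogeneous hhom
  obtain ⟨m, hm⟩ := support_nonempty.mpr hg0
  have h0 := support_coord_bound (t := 0) (t1 := 1) (t2 := 2) (by decide) (by decide) (by decide)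
    hghom (vto_aeval 0 (hv 0)) hm
  have h1 := support_coord_bound (t := 1) (t1 := 0) (t2 := 2) (by decide) (by decide) (by decide)
    hghom (vto_aeval 1 (hv 1)) hm
  have h2 := support_coord_bound (t := 2) (t1 := 0) (t2 := 1) (by decide) (by decide) (by decide)
    hghom (vto_aeval 2 (hv 2)) hm
  have hd := homog_degree_eq hghom hm
  omega

lemma eval_linForm (w q : Fin 3 → ℝ) :
    MvPolynomial.eval w (linForm q) = ∑ j, q j * w j := by
  simp [linForm]

lemma exists_li_triple {k : ℕ} (p : Fin k → (Fin 3 → ℝ))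
    (h : ¬ ∃ q : Fin 3 → ℝ, q ≠ 0 ∧ ∀ i, MvPolynomial.eval (p i) (linForm q) = 0) :
    ∃ A : Fin 3 → Fin 3 → ℝ, LinearIndependent ℝ A ∧ ∀ t, ∃ i, A t = p i := by
  -- step 1 : the p i span
  have hspan : Submodule.span ℝ (Set.range p) = ⊤ := by
    by_contra hs
    apply h
    set ι := (WithLp.linearEquiv 2 ℝ (Fin 3 → ℝ)).symm with hι
    set K : Submodule ℝ (EuclideanSpace ℝ (Fin 3)) :=
      Submodule.span ℝ (Set.range (fun i => ι (p i))) with hK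
    have hKt : K ≠ ⊤ := by
      intro hKt
      apply hs
      have : K = Submodule.map (ι : (Fin 3 → ℝ) →ₗ[ℝ] EuclideanSpace ℝ (Fin 3))
          (Submodule.span ℝ (Set.range p)) := by
        rw [Submodule.map_span]
        congr 1
        rw [← Set.range_comp]
        rfl
      rw [this] at hKt
      have := Submodule.map_injective_of_injective (f := (ι : (Fin 3 → ℝ) →ₗ[ℝ] EuclideanSpace ℝ (Fin 3)))
        (show Function.Injective (ι : (Fin 3 → ℝ) →ₗ[ℝ] EuclideanSpace ℝ (Fin 3)) from ι.injective)
      apply this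
      rw [hKt]
      rw [Submodule.map_top, LinearEquiv.range]
    have hKo : Kᗮ ≠ ⊥ := by
      intro hbot
      exact hKt (Submodule.orthogonal_eq_bot_iff.mp hbot)
    obtain ⟨q', hq'K, hq'0⟩ := Submodule.exists_mem_ne_zero_of_ne_bot hKo
    refine ⟨(WithLp.linearEquiv 2 ℝ (Fin 3 → ℝ)) q', by simpa using hq'0, fun i => ?_⟩
    rw [eval_linForm]
    have hmem : ι (p i) ∈ K := Submodule.subset_span ⟨i, rfl⟩
    have := (Submodule.mem_orthogonal K q').mp hq'K _ hmem
    rw [PiLp.inner_apply] at this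
    simpa [hι, RCLike.inner_apply, WithLp.linearEquiv_symm_apply, PiLp.toLp_apply, mul_comm] using this
  -- step 2 : extract a basis from the spanning family
  obtain ⟨b, hbs, hbspan, hbli⟩ := exists_linearIndependent ℝ (Set.range p)
  rw [hspan] at hbspan
  have hbspan' : ⊤ ≤ Submodule.span ℝ (Set.range (Subtype.val : b → (Fin 3 → ℝ))) := by
    rw [Subtype.range_coe_subtype, Set.setOf_mem_eq, hbspan]
  haveI : Fintype b := FiniteDimensional.fintypeBasisIndex (Module.Basis.mk hbli hbspan')
  have hcard : Fintype.card b = 3 := by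
    have h1 := Module.finrank_eq_card_basis (Module.Basis.mk hbli hbspan')
    have h2 : Module.finrank ℝ (Fin 3 → ℝ) = 3 := by simp
    rw [h2] at h1; exact h1.symm
  set e := Fintype.equivFinOfCardEq hcard with he
  set bb := (Module.Basis.mk hbli hbspan').reindex e with hbb
  refine ⟨fun t => bb t, bb.linearIndependent, fun t => ?_⟩
  have hbt : bb t = ((e.symm t : b) : Fin 3 → ℝ) := by
    rw [hbb, Module.Basis.reindex_apply, Module.Basis.mk_apply]
  have hmem : ((e.symm t : b) : Fin 3 → ℝ) ∈ b := (e.symm t).2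
  obtain ⟨i, hi⟩ := hbs hmem
  exact ⟨i, by simp only []; rw [hbt]; exact hi.symm⟩

lemma linForm_ne_zero {q : Fin 3 → ℝ} (hq : q ≠ 0) : linForm q ≠ 0 := by
  intro h
  apply hq
  funext j
  have := congrArg (MvPolynomial.eval q) h
  rw [eval_linForm] at this
  simp only [map_zero] at this
  have hz : ∑ j', q j' * q j' = 0 := this
  have : q j * q j = 0 := by
    by_contra hne
    have hpos : 0 < ∑ j', q j' * q j' := by
      apply Finset.sum_pos' (fun i _ => mul_self_nonneg (q i))
      exact ⟨j, Finset.mem_univ j, lt_of_le_of_ne (mul_self_nonneg (q j)) (Ne.symm hne)⟩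
    linarith
  simpa [mul_self_eq_zero] using this

lemma linForm_isHomogeneous (q : Fin 3 → ℝ) : (linForm q).IsHomogeneous 1 := by
  apply MvPolynomial.IsHomogeneous.sum
  intro t _
  simpa using (isHomogeneous_C _ (q t)).mul (isHomogeneous_X ℝ t)

def orthVec (w : Fin 3 → ℝ) : Fin 3 → ℝ :=
  if w 0 = 0 ∧ w 1 = 0 then ![1, 0, 0] else ![w 1, -(w 0), 0]

lemma orthVec_ne_zero {w : Fin 3 → ℝ} : orthVec w ≠ 0 ∨ w = 0 := by
  rcases eq_or_ne w 0 with h | h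
  · right; exact h
  · left
    rw [orthVec]
    split_ifs with hc
    · intro h0
      have := congrFun h0 0
      simpa using this
    · intro h0
      apply hc
      constructor
      · have := congrFun h0 1; simpa using this
      · have := congrFun h0 0; simpa using this

lemma eval_linForm_orthVec (w : Fin 3 → ℝ) :
    MvPolynomial.eval w (linForm (orthVec w)) = 0 := by
  rw [eval_linForm, orthVec]
  split_ifs with hc
  · simp [Fin.sum_univ_three, hc.1]
  · simp [Fin.sum_univ_three]; ring

lemma alpha_set_nonempty {k : ℕ} (p : Fin k → (Fin 3 → ℝ)) (hp0 : ∀ i, p i ≠ 0) (s : ℕ) :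
    (k * s) ∈ {d : ℕ | ∃ F : S3, F ≠ 0 ∧ F.IsHomogeneous d ∧ ∀ i, VanishesToOrder F (p i) s} := by
  refine ⟨∏ i, (linForm (orthVec (p i))) ^ s, ?_, ?_, ?_⟩
  · rw [Finset.prod_ne_zero_iff]
    intro i _
    apply pow_ne_zero
    apply linForm_ne_zero
    rcases orthVec_ne_zero (w := p i) with h | h
    · exact h
    · exact absurd h (hp0 i)
  · have := MvPolynomial.IsHomogeneous.prod Finset.univ
      (fun i => (linForm (orthVec (p i))) ^ s) (fun _ => s)
      (fun i _ => by simpa using (linForm_isHomogeneous (orthVec (p i))).pow s)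
    simpa [Finset.sum_const, Finset.card_univ, mul_comm] using this
  · intro j
    rw [← Finset.mul_prod_erase Finset.univ _ (Finset.mem_univ j)]
    have h1 : VanishesToOrder ((linForm (orthVec (p j))) ^ s) (p j) s :=
      vto_pow (eval_linForm_orthVec (p j)) s
    have := vto_mul h1 (vto_order_zero (∏ i ∈ Finset.univ.erase j,
      (linForm (orthVec (p i))) ^ s) (p j))
    simpa using this

lemma alpha_mem (hk : 1 ≤ k) (p : Fin k → (Fin 3 → ℝ)) (hp0 : ∀ i, p i ≠ 0) (s : ℕ) :
    ∃ F : S3, F ≠ 0 ∧ F.IsHomogeneous (alphaDeg p s) ∧ ∀ i, VanishesToOrder F (p i) s :=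
  Nat.sInf_mem ⟨k * s, alpha_set_nonempty p hp0 s⟩

lemma alpha_ge (hk : 1 ≤ k) (p : Fin k → (Fin 3 → ℝ)) (hp0 : ∀ i, p i ≠ 0) (s : ℕ) :
    s ≤ alphaDeg p s := by
  obtain ⟨F, hF, hhom, hv⟩ := alpha_mem hk p hp0 s
  exact deg_ge hF hhom (hv ⟨0, hk⟩)

/-- Chudnovsky-type bounds: for distinct points `p 1, …, p k` of `P²`,
`α̂(X) ≥ 1`; `α̂(X) = 1` iff the points are collinear (there is a nonzero linear form
vanishing at all of them); and if they are not collinear then `α̂(X) ≥ 3/2`. -/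
theorem statement3 {k : ℕ} (hk : 1 ≤ k) (p : Fin k → (Fin 3 → ℝ))
    (hp : PairwiseNonProp p) :
    1 ≤ waldschmidt p ∧
    (waldschmidt p = 1 ↔
      ∃ q : Fin 3 → ℝ, q ≠ 0 ∧ ∀ i, MvPolynomial.eval (p i) (linForm q) = 0) ∧
    ((¬ ∃ q : Fin 3 → ℝ, q ≠ 0 ∧ ∀ i, MvPolynomial.eval (p i) (linForm q) = 0) →
      (3 : ℝ) / 2 ≤ waldschmidt p) := by
  obtain ⟨hp0, -⟩ := hp
  set W := {x : ℝ | ∃ s : ℕ, 1 ≤ s ∧ x = (alphaDeg p s : ℝ) / (s : ℝ)} with hW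
  have hWne : W.Nonempty := ⟨(alphaDeg p 1 : ℝ) / 1, 1, le_refl 1, by norm_num⟩
  have hwd : waldschmidt p = sInf W := rfl
  have hge1 : 1 ≤ waldschmidt p := by
    rw [hwd]
    apply le_csInf hWne
    rintro x ⟨s, hs, rfl⟩
    have h1 := alpha_ge hk p hp0 s
    have hs0 : (0:ℝ) < (s:ℝ) := by exact_mod_cast hs
    rw [le_div_iff₀ hs0, one_mul]
    exact_mod_cast h1
  have hchud : (¬ ∃ q : Fin 3 → ℝ, q ≠ 0 ∧ ∀ i, MvPolynomial.eval (p i) (linForm q) = 0) →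
      (3 : ℝ) / 2 ≤ waldschmidt p := by
    intro hnc
    obtain ⟨A, hA, hAp⟩ := exists_li_triple p hnc
    rw [hwd]
    apply le_csInf hWne
    rintro x ⟨s, hs, rfl⟩
    obtain ⟨F, hF, hhom, hv⟩ := alpha_mem hk p hp0 s
    have hvA : ∀ t, VanishesToOrder F (A t) s := by
      intro t
      obtain ⟨i, hi⟩ := hAp t
      rw [hi]; exact hv i
    have hb := chudnovsky_bound hF hhom A hA hvA
    have hs0 : (0:ℝ) < (s:ℝ) := by exact_mod_cast hs
    rw [div_le_div_iff₀ (by norm_num) hs0]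
    have hb' : (3:ℝ) * (s:ℝ) ≤ 2 * (alphaDeg p s : ℝ) := by exact_mod_cast hb
    linarith
  refine ⟨hge1, ⟨?_, ?_⟩, hchud⟩
  · intro hw1
    by_contra hnc
    have := hchud hnc
    rw [hw1] at this
    norm_num at this
  · rintro ⟨q, hq, hqi⟩
    have halpha : ∀ s : ℕ, 1 ≤ s → alphaDeg p s = s := by
      intro s hs
      refine le_antisymm (Nat.sInf_le ?_) (alpha_ge hk p hp0 s)
      exact ⟨(linForm q) ^ s, pow_ne_zero s (linForm_ne_zero hq),
        by simpa using (linForm_isHomogeneous q).pow s, fun i => vto_pow (hqi i) s⟩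
    have hWeq : W = {1} := by
      ext x
      constructor
      · rintro ⟨s, hs, rfl⟩
        have hs0 : (s:ℝ) ≠ 0 := by
          have : (0:ℝ) < (s:ℝ) := by exact_mod_cast hs
          linarith
        simp only [Set.mem_singleton_iff, halpha s hs]
        exact div_self hs0
      · rintro rfl
        exact ⟨1, le_refl 1, by rw [halpha 1 (le_refl 1)]; norm_num⟩
    rw [hwd, hWeq, csInf_singleton]


end
end

section
/- Let (p_1,…,p_k; λ_1,…,λ_n) be a dual vertex-star configuration and X = (p_1,…,p_k). Then for every integer s ≥ 1, α_{2s}(X) ≥ min{6s − 3, (s − 1)·n + 3}; that is, every nonzero homogeneous polynomial vanishing to order ≥ 2s at all of p_1,…,p_k has degree at least min{6s − 3, (s − 1)·n + 3}. -/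
open MvPolynomial

noncomputable section

open Classical in
/-- A dual vertex-star configuration: pairwise non-proportional nonzero points
`p i` and pairwise non-proportional nonzero linear forms (given by coefficient
vectors `lam j`), `n ≥ 4`, such that every point lies on exactly two of the lines
and every line contains at least three of the points. -/
def DualVertexStar {k n : ℕ} (p : Fin k → (Fin 3 → ℝ)) (lam : Fin n → (Fin 3 → ℝ)) : Prop :=
  PairwiseNonProp p ∧ PairwiseNonProp lam ∧ 4 ≤ n ∧
  (∀ i, (Finset.univ.filter fun j => MvPolynomial.eval (p i) (linForm (lam j)) = 0).card = 2) ∧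
  (∀ j, 3 ≤ (Finset.univ.filter fun i => MvPolynomial.eval (p i) (linForm (lam j)) = 0).card)


namespace Star5

open MvPolynomial Finsupp

/-! ### degree basics -/

lemma mdeg_add (a b : Fin 3 →₀ ℕ) : (a + b).degree = a.degree + b.degree := by
  simp [Finsupp.degree_eq_weight_one, map_add]

lemma mdeg_single (i : Fin 3) : (Finsupp.single i 1).degree = 1 := by
  exact Finsupp.degree_single i 1

/-! ### order (all coefficients of low degree vanish) -/

/-- All coefficients of monomials of total degree `< s` vanish. -/
def ordGe (Q : S3) (s : ℕ) : Prop :=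
  ∀ m : Fin 3 →₀ ℕ, m.degree < s → MvPolynomial.coeff m Q = 0

lemma ordGe_zero (Q : S3) : ordGe Q 0 := fun _ h => absurd h (Nat.not_lt_zero _)

lemma ordGe_mul_left {A : S3} {a : ℕ} (hA : A.IsHomogeneous a) {B : S3} {b : ℕ}
    (hB : ordGe B b) : ordGe (A * B) (a + b) := by
  intro m hm
  rw [MvPolynomial.coeff_mul]
  refine Finset.sum_eq_zero fun x hx => ?_
  rw [Finset.HasAntidiagonal.mem_antidiagonal] at hx
  rcases eq_or_ne x.1.degree a with h1 | h1
  · have h2 : x.2.degree < b := by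
      have := mdeg_add x.1 x.2
      rw [hx] at this; omega
    rw [hB _ h2, mul_zero]
  · rw [hA.coeff_eq_zero h1, zero_mul]

lemma ordGe_mul_left' {A : S3} {a : ℕ} (hA : A.IsHomogeneous a) (B : S3) :
    ordGe (A * B) a := by
  simpa using ordGe_mul_left hA (ordGe_zero B)

/-- a minimal nonvanishing homogeneous component -/
lemma exists_min_comp {B : S3} (hB : B ≠ 0) :
    ∃ e, homogeneousComponent e B ≠ 0 ∧ ∀ f, f < e → homogeneousComponent f B = 0 := by
  classical
  have hsupp : B.support.Nonempty := MvPolynomial.support_nonempty.mpr hB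
  have hne : (B.support.image Finsupp.degree).Nonempty := hsupp.image _
  refine ⟨(B.support.image Finsupp.degree).min' hne, ?_, ?_⟩
  · obtain ⟨m, hm, hdm⟩ := Finset.mem_image.mp ((B.support.image Finsupp.degree).min'_mem hne)
    intro h0
    have := MvPolynomial.coeff_homogeneousComponent
      (σ := Fin 3) (R := ℝ) ((B.support.image Finsupp.degree).min' hne) B m
    rw [h0, hdm] at this
    simp only [MvPolynomial.coeff_zero, if_pos rfl] at this
    exact (MvPolynomial.mem_support_iff.mp hm) this.symm
  · intro f hf
    apply MvPolynomial.homogeneousComponent_eq_zero'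
    intro d hd hdf
    have : f ∈ B.support.image Finsupp.degree := Finset.mem_image.mpr ⟨d, hd, hdf⟩
    exact absurd (Finset.min'_le _ _ this) (not_le.mpr hf)

lemma coeff_zero_of_low {B : S3} {e : ℕ}
    (hlow : ∀ f, f < e → homogeneousComponent f B = 0) {m : Fin 3 →₀ ℕ}
    (hm : m.degree < e) : MvPolynomial.coeff m B = 0 := by
  have h := MvPolynomial.coeff_homogeneousComponent (σ := Fin 3) (R := ℝ) m.degree B m
  rw [hlow _ hm] at h
  simpa using h.symm

lemma comp_mul_homog {A B : S3} {a e : ℕ} (hA : A.IsHomogeneous a)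
    (hlow : ∀ f, f < e → homogeneousComponent f B = 0) :
    homogeneousComponent (a + e) (A * B) = A * homogeneousComponent e B := by
  classical
  conv_lhs => rw [← MvPolynomial.sum_homogeneousComponent B]
  rw [Finset.mul_sum, map_sum]
  have hterm : ∀ f, homogeneousComponent (a + e) (A * homogeneousComponent f B)
      = if f = e then A * homogeneousComponent e B else 0 := by
    intro f
    have hmem : A * homogeneousComponent f B ∈ homogeneousSubmodule (Fin 3) ℝ (a + f) := by
      exact hA.mul (MvPolynomial.homogeneousComponent_isHomogeneous f B)
    rw [MvPolynomial.homogeneousComponent_of_mem hmem]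
    by_cases hfe : f = e
    · subst hfe; simp
    · rw [if_neg (by omega), if_neg hfe]
  rw [Finset.sum_congr rfl fun f _ => hterm f]
  rw [Finset.sum_ite_eq' (Finset.range (B.totalDegree + 1)) e
      (fun _ => A * homogeneousComponent e B)]
  by_cases he : e ∈ Finset.range (B.totalDegree + 1)
  · rw [if_pos he]
  · rw [if_neg he]
    simp only [Finset.mem_range, not_lt] at he
    have : homogeneousComponent e B = 0 :=
      MvPolynomial.homogeneousComponent_eq_zero e B (by omega)
    rw [this, mul_zero]

lemma ordGe_cancel_homog {A B : S3} {a b : ℕ} (hA : A.IsHomogeneous a) (hA0 : A ≠ 0)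
    (h : ordGe (A * B) (a + b)) : ordGe B b := by
  rcases eq_or_ne B 0 with rfl | hB0
  · intro m _; simp
  obtain ⟨e, he, hlow⟩ := exists_min_comp hB0
  have hbe : b ≤ e := by
    by_contra hcon
    push_neg at hcon
    have hcomp : homogeneousComponent (a + e) (A * B) = A * homogeneousComponent e B :=
      comp_mul_homog hA hlow
    have hne : A * homogeneousComponent e B ≠ 0 := mul_ne_zero hA0 he
    apply hne
    rw [← hcomp]
    ext m
    rw [MvPolynomial.coeff_homogeneousComponent]
    split_ifs with hdm
    · exact h m (by omega)
    · simp
  intro m hm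
  exact coeff_zero_of_low hlow (by omega)

lemma ordGe_cancel_const {M B : S3} {b : ℕ} (hM : MvPolynomial.constantCoeff M ≠ 0)
    (h : ordGe (M * B) b) : ordGe B b := by
  rcases eq_or_ne B 0 with rfl | hB0
  · intro m _; simp
  obtain ⟨e, he, hlow⟩ := exists_min_comp hB0
  have hbe : b ≤ e := by
    by_contra hcon
    push_neg at hcon
    apply he
    ext m
    rw [MvPolynomial.coeff_homogeneousComponent]
    split_ifs with hdm
    · -- coeff m (M*B) = constantCoeff M * coeff m B, and it vanishes
      have hMB : MvPolynomial.coeff m (M * B) = MvPolynomial.constantCoeff M *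
          MvPolynomial.coeff m B := by
        rw [MvPolynomial.coeff_mul]
        rw [Finset.sum_eq_single (0, m)]
        · simp [MvPolynomial.constantCoeff_eq]
        · rintro ⟨u, v⟩ hx hne
          rw [Finset.HasAntidiagonal.mem_antidiagonal] at hx
          rcases eq_or_ne u 0 with rfl | hu
          · have hvm : v = m := by simpa using hx
            exact absurd (by rw [hvm]) hne
          · have hvd : v.degree < e := by
              have hadd := mdeg_add u v
              have hu' : 0 < u.degree := by
                rcases Nat.eq_zero_or_pos u.degree with h0 | h0
                · exact absurd ((Finsupp.degree_eq_zero_iff u).mp h0) hu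
                · exact h0
              rw [hx, hdm] at hadd
              omega
            rw [coeff_zero_of_low hlow hvd, mul_zero]
        · intro hnot
          exact absurd (Finset.HasAntidiagonal.mem_antidiagonal.mpr (zero_add m)) hnot
      have : MvPolynomial.coeff m (M * B) = 0 := h m (by omega)
      rw [hMB] at this
      rcases mul_eq_zero.mp this with h' | h'
      · exact absurd h' hM
      · exact h'
    · simp
  intro m hm
  exact coeff_zero_of_low hlow (by omega)

/-- a nonzero factor of a nonzero homogeneous polynomial is homogeneous,
with complementary degree -/
lemma homog_of_dvd {A B : S3} {d a : ℕ} (hAB : (A * B).IsHomogeneous d)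
    (hA : A.IsHomogeneous a) (hA0 : A ≠ 0) (hB : B ≠ 0) :
    ∃ b, a + b = d ∧ B.IsHomogeneous b := by
  obtain ⟨e, he, hlow⟩ := exists_min_comp hB
  have hcomp : homogeneousComponent (a + e) (A * B) = A * homogeneousComponent e B :=
    comp_mul_homog hA hlow
  have hmem : A * B ∈ homogeneousSubmodule (Fin 3) ℝ d := hAB
  rw [MvPolynomial.homogeneousComponent_of_mem hmem] at hcomp
  have hne : A * homogeneousComponent e B ≠ 0 := mul_ne_zero hA0 he
  by_cases had : a + e = d
  · rw [if_pos had] at hcomp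
    have hBe : B = homogeneousComponent e B := mul_left_cancel₀ hA0 hcomp
    refine ⟨e, had, ?_⟩
    rw [hBe]
    exact MvPolynomial.homogeneousComponent_isHomogeneous e B
  · rw [if_neg had] at hcomp
    exact absurd hcomp.symm hne

/-! ### linear forms -/

lemma linForm_coeff (v : Fin 3 → ℝ) (i : Fin 3) :
    MvPolynomial.coeff (Finsupp.single i 1) (linForm v) = v i := by
  rw [linForm, MvPolynomial.coeff_sum]
  rw [Finset.sum_eq_single i (fun j _ hji => ?_) (by simp)]
  · simp
  · rw [MvPolynomial.coeff_C_mul, MvPolynomial.coeff_X', if_neg, mul_zero]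
    intro hc
    rcases (Finsupp.single_eq_single_iff _ _ _ _).mp hc with ⟨h, _⟩ | ⟨h, _⟩
    · exact hji h
    · exact one_ne_zero h

lemma linForm_eq_zero_iff {v : Fin 3 → ℝ} : linForm v = 0 ↔ v = 0 := by
  constructor
  · intro h
    funext i
    rw [← linForm_coeff v i, h]
    simp
  · intro h; rw [h, linForm]; simp

lemma isHomogeneous_linForm (v : Fin 3 → ℝ) : (linForm v).IsHomogeneous 1 :=
  MvPolynomial.IsHomogeneous.sum _ _ _ fun i _ => MvPolynomial.isHomogeneous_C_mul_X _ _

lemma eval_linForm (x v : Fin 3 → ℝ) : MvPolynomial.eval x (linForm v) = ∑ i, v i * x i := by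
  simp [linForm]

lemma aeval_linForm (f : Fin 3 → S3) (v : Fin 3 → ℝ) :
    MvPolynomial.aeval f (linForm v) = ∑ i, MvPolynomial.C (v i) * f i := by
  simp [linForm, MvPolynomial.algebraMap_eq]

lemma smul_linForm (c : ℝ) (v : Fin 3 → ℝ) :
    MvPolynomial.C c * linForm v = linForm (c • v) := by
  rw [linForm, linForm, Finset.mul_sum]
  refine Finset.sum_congr rfl fun i _ => ?_
  rw [← mul_assoc, ← MvPolynomial.C_mul]; rfl

/-! ### translation to a point -/

/-- The substitution `X i ↦ X i + p i`. -/
def transAt (p : Fin 3 → ℝ) : S3 →ₐ[ℝ] S3 :=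
  MvPolynomial.aeval (fun i => MvPolynomial.X i + MvPolynomial.C (p i))

lemma transAt_X (p : Fin 3 → ℝ) (i : Fin 3) :
    transAt p (MvPolynomial.X i) = MvPolynomial.X i + MvPolynomial.C (p i) :=
  MvPolynomial.aeval_X _ _

lemma constantCoeff_transAt (p : Fin 3 → ℝ) (F : S3) :
    MvPolynomial.constantCoeff (transAt p F) = MvPolynomial.eval p F := by
  have : (MvPolynomial.constantCoeff.comp (transAt p : S3 →ₐ[ℝ] S3).toRingHom : S3 →+* ℝ)
      = MvPolynomial.eval p := by
    apply MvPolynomial.ringHom_ext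
    · intro r; simp [transAt]
    · intro i; simp [transAt]
  exact DFunLike.congr_fun this F

lemma coeff_zero_transAt (p : Fin 3 → ℝ) (F : S3) :
    MvPolynomial.coeff 0 (transAt p F) = MvPolynomial.eval p F := by
  rw [← constantCoeff_transAt]; rfl

lemma transAt_linForm (p v : Fin 3 → ℝ) :
    transAt p (linForm v) = linForm v + MvPolynomial.C (∑ i, v i * p i) := by
  rw [transAt, aeval_linForm, linForm]
  rw [map_sum, ← Finset.sum_add_distrib]
  refine Finset.sum_congr rfl fun i _ => ?_
  rw [mul_add, ← MvPolynomial.C_mul]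

lemma pderiv_transAt (p : Fin 3 → ℝ) (i : Fin 3) (F : S3) :
    MvPolynomial.pderiv i (transAt p F) = transAt p (MvPolynomial.pderiv i F) := by
  induction F using MvPolynomial.induction_on with
  | C c => simp
  | add f g hf hg => simp [map_add, hf, hg]
  | mul_X f j hf =>
      rw [map_mul, MvPolynomial.pderiv_mul, MvPolynomial.pderiv_mul, map_add, map_mul, hf,
        transAt_X]
      congr 1
      rw [map_mul]
      congr 1
      rcases eq_or_ne i j with rfl | hij
      · simp
      · simp [Pi.single_eq_of_ne (Ne.symm hij)]

/-! ### iterated derivatives and coefficients -/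

lemma coeff_pderiv (i : Fin 3) (R : S3) (m : Fin 3 →₀ ℕ) :
    MvPolynomial.coeff m (MvPolynomial.pderiv i R)
      = (m i + 1) * MvPolynomial.coeff (m + Finsupp.single i 1) R := by
  induction R using MvPolynomial.induction_on' with
  | monomial s c =>
      rw [MvPolynomial.pderiv_monomial]
      rw [MvPolynomial.coeff_monomial, MvPolynomial.coeff_monomial]
      rcases eq_or_ne s (m + Finsupp.single i 1) with rfl | hne
      · rw [if_pos rfl, if_pos (add_tsub_cancel_right m (Finsupp.single i 1))]
        rw [Finsupp.add_apply, Finsupp.single_eq_same]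
        push_cast; ring
      · rw [if_neg hne]
        rcases eq_or_ne (s - Finsupp.single i 1) m with heq | hne2
        · rw [if_pos heq]
          rcases Nat.eq_zero_or_pos (s i) with h0 | hpos
          · simp [h0]
          · exfalso
            apply hne
            ext j
            have h1 := DFunLike.congr_fun heq j
            simp only [Finsupp.tsub_apply, Finsupp.coe_add, Pi.add_apply,
              Finsupp.single_apply] at h1 ⊢
            rcases eq_or_ne i j with rfl | hij
            · simp at h1 ⊢; omega
            · simp [hij] at h1 ⊢; omega
        · rw [if_neg hne2, mul_zero]
  | add f g hf hg => simp [map_add, hf, hg, mul_add]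

lemma diffOp_cons (i : Fin 3) (L : List (Fin 3)) (F : S3) :
    diffOp (i :: L) F = MvPolynomial.pderiv i (diffOp L F) := rfl

lemma diffOp_nil (F : S3) : diffOp [] F = F := rfl

lemma diffOp_transAt (p : Fin 3 → ℝ) (L : List (Fin 3)) (F : S3) :
    diffOp L (transAt p F) = transAt p (diffOp L F) := by
  induction L with
  | nil => rfl
  | cons i L ih => rw [diffOp_cons, diffOp_cons, ih, pderiv_transAt]

/-- the exponent multiset of a list of directions -/
def mList (L : List (Fin 3)) : Fin 3 →₀ ℕ := Multiset.toFinsupp (L : Multiset (Fin 3))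

lemma mList_nil : mList [] = 0 := by simp [mList]

lemma mList_cons (i : Fin 3) (L : List (Fin 3)) :
    mList (i :: L) = Finsupp.single i 1 + mList L := by
  rw [mList, mList]
  have : ((i :: L : List (Fin 3)) : Multiset (Fin 3)) = {i} + (L : Multiset (Fin 3)) := by
    simp [Multiset.cons_eq_cons]
  rw [this, map_add, Multiset.toFinsupp_singleton]

lemma degree_mList (L : List (Fin 3)) : (mList L).degree = L.length := by
  induction L with
  | nil => simp [mList_nil]
  | cons i L ih => rw [mList_cons, mdeg_add, mdeg_single, ih, List.length_cons]; omega

lemma coeff_diffOp (L : List (Fin 3)) (Q : S3) (m : Fin 3 →₀ ℕ) :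
    ∃ c : ℕ, 0 < c ∧ MvPolynomial.coeff m (diffOp L Q)
      = (c : ℝ) * MvPolynomial.coeff (m + mList L) Q := by
  induction L generalizing m with
  | nil => exact ⟨1, one_pos, by simp [diffOp_nil, mList_nil]⟩
  | cons i L ih =>
      obtain ⟨c, hc, hcoeff⟩ := ih (m + Finsupp.single i 1)
      refine ⟨(m i + 1) * c, by positivity, ?_⟩
      rw [diffOp_cons, coeff_pderiv, hcoeff, mList_cons]
      push_cast
      rw [add_assoc]
      ring

/-- The key equivalence : vanishing to order `s` at `p` is the same as all coefficients of
the translated polynomial in degrees `< s` vanishing. -/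
lemma vanishes_iff_ordGe (F : S3) (p : Fin 3 → ℝ) (s : ℕ) :
    VanishesToOrder F p s ↔ ordGe (transAt p F) s := by
  constructor
  · intro hV m hm
    set L : List (Fin 3) := (Finsupp.toMultiset m).toList with hL
    have hmL : mList L = m := by
      rw [mList, hL, Multiset.coe_toList, Finsupp.toMultiset_toFinsupp]
    have hlen : L.length < s := by
      rw [hL, Multiset.length_toList]
      have : Multiset.card (Finsupp.toMultiset m) = m.degree := by
        rw [Finsupp.card_toMultiset]
        rfl
      omega
    have h0 := hV L hlen
    rw [← coeff_zero_transAt, ← diffOp_transAt] at h0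
    obtain ⟨c, hc, hcoeff⟩ := coeff_diffOp L (transAt p F) 0
    rw [hcoeff, zero_add, hmL] at h0
    rcases mul_eq_zero.mp h0 with h' | h'
    · exact absurd h' (by positivity)
    · exact h'
  · intro hO L hlen
    rw [← coeff_zero_transAt, ← diffOp_transAt]
    obtain ⟨c, hc, hcoeff⟩ := coeff_diffOp L (transAt p F) 0
    rw [hcoeff, zero_add]
    rw [hO (mList L) (by rw [degree_mList]; exact hlen), mul_zero]

/-! ### linear substitutions -/

/-- The substitution `X i ↦ ∑ j, N i j • X j`. -/
def linSub (N : Matrix (Fin 3) (Fin 3) ℝ) : S3 →ₐ[ℝ] S3 :=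
  MvPolynomial.aeval (fun i => linForm (N i))

lemma linSub_X (N : Matrix (Fin 3) (Fin 3) ℝ) (i : Fin 3) :
    linSub N (MvPolynomial.X i) = linForm (N i) := MvPolynomial.aeval_X _ _

lemma sum_C_mul_linForm (w : Fin 3 → ℝ) (v : Fin 3 → Fin 3 → ℝ) :
    ∑ j, MvPolynomial.C (w j) * linForm (v j) = linForm (fun k => ∑ j, w j * v j k) := by
  simp only [linForm, Finset.mul_sum, ← mul_assoc, ← MvPolynomial.C_mul]
  rw [Finset.sum_comm]
  refine Finset.sum_congr rfl fun k _ => ?_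
  rw [← Finset.sum_mul, ← map_sum]

lemma linSub_linSub (M N : Matrix (Fin 3) (Fin 3) ℝ) (F : S3) :
    linSub M (linSub N F) = linSub (N * M) F := by
  have h : (linSub M).comp (linSub N) = linSub (N * M) := by
    apply MvPolynomial.algHom_ext
    intro i
    rw [AlgHom.comp_apply, linSub_X, linSub_X, linSub, aeval_linForm]
    rw [show (fun j => MvPolynomial.C (N i j) * linForm (M j))
      = fun j => MvPolynomial.C (N i j) * linForm (M j) from rfl]
    exact (sum_C_mul_linForm (fun j => N i j) (fun j => M j)).trans rfl
  exact DFunLike.congr_fun h F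

lemma linSub_one (F : S3) : linSub 1 F = F := by
  have h : linSub (1 : Matrix (Fin 3) (Fin 3) ℝ) = AlgHom.id ℝ S3 := by
    apply MvPolynomial.algHom_ext
    intro i
    rw [linSub_X, AlgHom.id_apply, linForm]
    rw [Finset.sum_eq_single i (fun j _ hji => by
      simp [Matrix.one_apply, Ne.symm hji]) (by simp)]
    simp [Matrix.one_apply]
  rw [h]; rfl

lemma linSub_inv_linSub {N : Matrix (Fin 3) (Fin 3) ℝ} (hu : IsUnit N.det) (F : S3) :
    linSub N⁻¹ (linSub N F) = F := by
  rw [linSub_linSub, Matrix.mul_nonsing_inv _ hu, linSub_one]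

lemma eval_linSub (N : Matrix (Fin 3) (Fin 3) ℝ) (y : Fin 3 → ℝ) (F : S3) :
    MvPolynomial.eval y (linSub N F) = MvPolynomial.eval (N.mulVec y) F := by
  have h : ((MvPolynomial.eval y).comp (linSub N : S3 →ₐ[ℝ] S3).toRingHom : S3 →+* ℝ)
      = MvPolynomial.eval (N.mulVec y) := by
    apply MvPolynomial.ringHom_ext
    · intro r; simp [linSub]
    · intro i
      simp only [RingHom.coe_comp, Function.comp_apply, AlgHom.toRingHom_eq_coe,
        RingHom.coe_coe, linSub_X, MvPolynomial.eval_X]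
      rw [eval_linForm]
      simp [Matrix.mulVec, dotProduct]
  exact DFunLike.congr_fun h F

lemma isHomogeneous_aeval1 {f : Fin 3 → S3} (hf : ∀ i, (f i).IsHomogeneous 1)
    {F : S3} {d : ℕ} (hF : F.IsHomogeneous d) :
    (MvPolynomial.aeval f F).IsHomogeneous d := by
  have h := hF.eval₂ (algebraMap ℝ S3) f
    (fun r => by rw [MvPolynomial.algebraMap_eq]; exact MvPolynomial.isHomogeneous_C _ _) hf
  rw [MvPolynomial.aeval_def]
  simpa using h

lemma isHomogeneous_linSub (N : Matrix (Fin 3) (Fin 3) ℝ) {F : S3} {d : ℕ}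
    (hF : F.IsHomogeneous d) : (linSub N F).IsHomogeneous d :=
  isHomogeneous_aeval1 (fun i => isHomogeneous_linForm (N i)) hF

lemma ordGe_aeval {f : Fin 3 → S3} (hf : ∀ i, (f i).IsHomogeneous 1)
    {Q : S3} {s : ℕ} (h : ordGe Q s) : ordGe (MvPolynomial.aeval f Q) s := by
  intro m hm
  conv_lhs => rw [← MvPolynomial.sum_homogeneousComponent Q]
  rw [map_sum, MvPolynomial.coeff_sum]
  refine Finset.sum_eq_zero fun e _ => ?_
  rcases lt_or_ge e s with he | he
  · have hcomp : homogeneousComponent e Q = 0 := by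
      apply MvPolynomial.homogeneousComponent_eq_zero'
      intro d hd hde
      exact absurd (h d (by omega)) (MvPolynomial.mem_support_iff.mp hd)
    rw [hcomp]; simp
  · exact (isHomogeneous_aeval1 hf
      (MvPolynomial.homogeneousComponent_isHomogeneous e Q)).coeff_eq_zero (by omega)

/-! ### restriction to the plane `X 2 = 0` -/

/-- The substitution `X 2 ↦ 0`. -/
def rho : S3 →ₐ[ℝ] S3 :=
  MvPolynomial.aeval ![MvPolynomial.X 0, MvPolynomial.X 1, 0]

lemma rho_hom1 : ∀ i, ((![MvPolynomial.X 0, MvPolynomial.X 1, 0] : Fin 3 → S3) i).IsHomogeneous 1 := by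
  intro i
  fin_cases i
  · exact MvPolynomial.isHomogeneous_X _ _
  · exact MvPolynomial.isHomogeneous_X _ _
  · exact MvPolynomial.isHomogeneous_zero _ _ _

lemma eval_rho (y : Fin 3 → ℝ) (F : S3) :
    MvPolynomial.eval y (rho F) = MvPolynomial.eval ![y 0, y 1, 0] F := by
  have h : ((MvPolynomial.eval y).comp (rho : S3 →ₐ[ℝ] S3).toRingHom : S3 →+* ℝ)
      = MvPolynomial.eval ![y 0, y 1, 0] := by
    apply MvPolynomial.ringHom_ext
    · intro r; simp [rho]
    · intro i
      simp only [RingHom.coe_comp, Function.comp_apply, AlgHom.toRingHom_eq_coe,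
        RingHom.coe_coe, MvPolynomial.eval_X]
      fin_cases i <;> simp [rho]
  exact DFunLike.congr_fun h F

lemma coeff_rho (R : S3) (m : Fin 3 →₀ ℕ) (hm : m 2 = 0) :
    MvPolynomial.coeff m (rho R) = MvPolynomial.coeff m R := by
  induction R using MvPolynomial.induction_on' with
  | monomial s c =>
      rw [rho, MvPolynomial.aeval_monomial]
      rcases eq_or_ne (s 2) 0 with hs2 | hs2
      · have hprod : (s.prod fun i k => (![MvPolynomial.X 0, MvPolynomial.X 1, 0] : Fin 3 → S3) i ^ k)
            = s.prod fun i k => MvPolynomial.X i ^ k := by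
          apply Finsupp.prod_congr
          intro i hi
          have hi2 : i ≠ 2 := by
            intro hc; subst hc
            exact (Finsupp.mem_support_iff.mp hi) hs2
          fin_cases i
          · rfl
          · rfl
          · exact absurd rfl hi2
        rw [hprod, MvPolynomial.algebraMap_eq, ← MvPolynomial.monomial_eq]
      · have h2mem : (2 : Fin 3) ∈ s.support := Finsupp.mem_support_iff.mpr hs2
        have hzero : (s.prod fun i k => (![MvPolynomial.X 0, MvPolynomial.X 1, 0] : Fin 3 → S3) i ^ k) = 0 := by
          apply Finset.prod_eq_zero h2mem
          simp [zero_pow hs2]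
        rw [hzero, mul_zero, MvPolynomial.coeff_monomial, if_neg (fun hc => hs2 (by rw [hc]; exact hm))]
        simp
  | add f g hf hg => rw [map_add, MvPolynomial.coeff_add, MvPolynomial.coeff_add, hf, hg]

lemma X2_dvd {R : S3} (h : ∀ m : Fin 3 →₀ ℕ, m 2 = 0 → MvPolynomial.coeff m R = 0) :
    MvPolynomial.X 2 ∣ R := by
  classical
  rw [MvPolynomial.as_sum R]
  apply Finset.dvd_sum
  intro m hm
  have hm2 : m 2 ≠ 0 := fun h0 => (MvPolynomial.mem_support_iff.mp hm) (h m h0)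
  refine ⟨MvPolynomial.monomial (m - Finsupp.single 2 1) (MvPolynomial.coeff m R), ?_⟩
  rw [MvPolynomial.X, MvPolynomial.monomial_mul, one_mul]
  rw [add_tsub_cancel_of_le (Finsupp.single_le_iff.mpr (Nat.one_le_iff_ne_zero.mpr hm2))]

/-! ### conjugating a linear form to `X 2` -/

lemma build_N {mu a b c : Fin 3 → ℝ}
    (ha : ∑ i, mu i * a i = 0) (hb : ∑ i, mu i * b i = 0) (hc : ∑ i, mu i * c i = 1)
    (hab : ∀ s t : ℝ, (∀ i, s * a i + t * b i = 0) → s = 0 ∧ t = 0) :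
    ∃ N : Matrix (Fin 3) (Fin 3) ℝ, IsUnit N.det ∧
      linSub N (linForm mu) = MvPolynomial.X 2 ∧
      (∀ y : Fin 3 → ℝ, N.mulVec y = fun i => y 0 * a i + y 1 * b i + y 2 * c i) := by
  classical
  set N : Matrix (Fin 3) (Fin 3) ℝ := Matrix.of fun i j => ![a, b, c] j i with hN
  have hmv : ∀ y : Fin 3 → ℝ, N.mulVec y = fun i => y 0 * a i + y 1 * b i + y 2 * c i := by
    intro y
    funext i
    simp only [Matrix.mulVec, dotProduct, hN, Matrix.of_apply]
    rw [Fin.sum_univ_three]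
    simp [Matrix.cons_val_zero, Matrix.cons_val_one]
    ring
  refine ⟨N, ?_, ?_, hmv⟩
  · rw [isUnit_iff_ne_zero]
    intro hdet
    obtain ⟨y, hy0, hyv⟩ := (Matrix.exists_mulVec_eq_zero_iff).mpr hdet
    have hdot : ∑ i, mu i * (N.mulVec y) i
        = y 0 * (∑ i, mu i * a i) + y 1 * (∑ i, mu i * b i) + y 2 * (∑ i, mu i * c i) := by
      rw [Finset.mul_sum, Finset.mul_sum, Finset.mul_sum, ← Finset.sum_add_distrib,
        ← Finset.sum_add_distrib]
      refine Finset.sum_congr rfl fun i _ => ?_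
      rw [hmv]; ring
    rw [hyv] at hdot
    simp only [Pi.zero_apply, mul_zero, Finset.sum_const_zero] at hdot
    rw [ha, hb, hc] at hdot
    have hy2 : y 2 = 0 := by linarith [hdot]
    have hzero : ∀ i, y 0 * a i + y 1 * b i = 0 := by
      intro i
      have := congr_fun hyv i
      rw [hmv] at this
      simp only [Pi.zero_apply] at this
      rw [hy2] at this
      linarith [this]
    obtain ⟨h0, h1⟩ := hab (y 0) (y 1) hzero
    apply hy0
    funext i
    fin_cases i
    · exact h0
    · exact h1
    · exact hy2
  · rw [linSub, aeval_linForm]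
    have hsum : ∑ i, MvPolynomial.C (mu i) * linForm (N i)
        = linForm (fun k => ∑ i, mu i * N i k) := sum_C_mul_linForm mu (fun i => N i)
    rw [hsum]
    have hw : (fun k => ∑ i, mu i * N i k) = ![0, 0, 1] := by
      funext k
      fin_cases k
      · simpa [hN] using ha
      · simpa [hN] using hb
      · simpa [hN] using hc
    rw [hw, linForm, Fin.sum_univ_three]
    simp

lemma dvd_of_conj {N : Matrix (Fin 3) (Fin 3) ℝ} (hu : IsUnit N.det) {v : Fin 3 → ℝ}
    (hNv : linSub N (linForm v) = MvPolynomial.X 2) {Q : S3}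
    (h2 : MvPolynomial.X 2 ∣ linSub N Q) : linForm v ∣ Q := by
  have h := map_dvd (linSub N⁻¹) h2
  rw [linSub_inv_linSub hu, ← hNv, linSub_inv_linSub hu] at h
  exact h

lemma prime_of_biject {f g : S3 →ₐ[ℝ] S3} (hfg : ∀ x, f (g x) = x) (hgf : ∀ x, g (f x) = x)
    {π : S3} (hπ : Prime π) : Prime (g π) := by
  refine ⟨fun h0 => hπ.1 ?_, fun hu => hπ.2.1 ?_, fun x y hxy => ?_⟩
  · rw [← hfg π, h0, map_zero]
  · have := hu.map f; rwa [hfg] at this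
  · have hdvd : π ∣ f x * f y := by
      have := map_dvd f hxy
      rwa [hfg, map_mul] at this
    rcases hπ.2.2 _ _ hdvd with hd | hd
    · left; have := map_dvd g hd; rwa [hgf] at this
    · right; have := map_dvd g hd; rwa [hgf] at this

lemma prime_X2 : Prime (MvPolynomial.X 2 : S3) := by
  have h0 : Prime (MvPolynomial.X 0 : S3) := by
    rw [← MulEquiv.prime_iff (MvPolynomial.finSuccEquiv ℝ 2).toMulEquiv]
    have : (MvPolynomial.finSuccEquiv ℝ 2).toMulEquiv (MvPolynomial.X 0) = Polynomial.X := by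
      simpa using MvPolynomial.finSuccEquiv_X_zero (R := ℝ) (n := 2)
    rw [this]
    exact Polynomial.prime_X
  have h := (MulEquiv.prime_iff (MvPolynomial.renameEquiv ℝ (Equiv.swap (0 : Fin 3) 2)).toMulEquiv
    (p := (MvPolynomial.X 0 : S3))).mpr h0
  have hr : (MvPolynomial.renameEquiv ℝ (Equiv.swap (0 : Fin 3) 2)).toMulEquiv
      (MvPolynomial.X 0 : S3) = MvPolynomial.X 2 := by
    simp [MvPolynomial.renameEquiv_apply, MvPolynomial.rename_X]
  rwa [hr] at h

lemma prime_of_conj {N : Matrix (Fin 3) (Fin 3) ℝ} (hu : IsUnit N.det) {v : Fin 3 → ℝ}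
    (hNv : linSub N (linForm v) = MvPolynomial.X 2) : Prime (linForm v) := by
  have hv : linForm v = linSub N⁻¹ (MvPolynomial.X 2) := by
    rw [← hNv, linSub_inv_linSub hu]
  rw [hv]
  exact prime_of_biject (f := linSub N) (g := linSub N⁻¹)
    (fun x => by rw [linSub_linSub, Matrix.nonsing_inv_mul _ hu, linSub_one])
    (fun x => by rw [linSub_linSub, Matrix.mul_nonsing_inv _ hu, linSub_one]) prime_X2

/-- Every nonzero linear form is prime. -/
lemma prime_linForm {v : Fin 3 → ℝ} (hv : v ≠ 0) : Prime (linForm v) := by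
  classical
  obtain ⟨j0, hj0⟩ : ∃ j0, v j0 ≠ 0 := by
    by_contra hc
    push_neg at hc
    exact hv (funext hc)
  set k1 : Fin 3 := if j0 = 0 then 1 else 0 with hk1
  set k2 : Fin 3 := if j0 = 2 then 1 else 2 with hk2
  have hk1j : k1 ≠ j0 := by
    rw [hk1]; split_ifs with h
    · rw [h]; decide
    · exact Ne.symm h
  have hk2j : k2 ≠ j0 := by
    rw [hk2]; split_ifs with h
    · rw [h]; decide
    · exact Ne.symm h
  have hk12 : k1 ≠ k2 := by
    rw [hk1, hk2]; split_ifs with h h'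
    · exfalso; rw [h] at h'; exact absurd h' (by decide)
    · decide
    · decide
    · decide
  set a : Fin 3 → ℝ := fun i => (Pi.single k1 1 : Fin 3 → ℝ) i
      - (v k1 / v j0) * (Pi.single j0 1 : Fin 3 → ℝ) i with hadef
  set b : Fin 3 → ℝ := fun i => (Pi.single k2 1 : Fin 3 → ℝ) i
      - (v k2 / v j0) * (Pi.single j0 1 : Fin 3 → ℝ) i with hbdef
  set c : Fin 3 → ℝ := fun i => (v j0)⁻¹ * (Pi.single j0 1 : Fin 3 → ℝ) i with hcdef
  have hdotsingle : ∀ k : Fin 3, ∑ i, v i * (Pi.single k 1 : Fin 3 → ℝ) i = v k := by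
    intro k
    rw [Finset.sum_eq_single k (fun j _ hjk => by simp [Pi.single_eq_of_ne hjk]) (by simp)]
    simp
  have ha : ∑ i, v i * a i = 0 := by
    have hsplit : ∑ i, v i * a i = (∑ i, v i * (Pi.single k1 1 : Fin 3 → ℝ) i)
        - (v k1 / v j0) * ∑ i, v i * (Pi.single j0 1 : Fin 3 → ℝ) i := by
      rw [Finset.mul_sum, ← Finset.sum_sub_distrib]
      refine Finset.sum_congr rfl fun i _ => by rw [hadef]; ring
    rw [hsplit, hdotsingle, hdotsingle]
    rw [div_mul_cancel₀ _ hj0, sub_self]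
  have hb : ∑ i, v i * b i = 0 := by
    have hsplit : ∑ i, v i * b i = (∑ i, v i * (Pi.single k2 1 : Fin 3 → ℝ) i)
        - (v k2 / v j0) * ∑ i, v i * (Pi.single j0 1 : Fin 3 → ℝ) i := by
      rw [Finset.mul_sum, ← Finset.sum_sub_distrib]
      refine Finset.sum_congr rfl fun i _ => by rw [hbdef]; ring
    rw [hsplit, hdotsingle, hdotsingle]
    rw [div_mul_cancel₀ _ hj0, sub_self]
  have hc : ∑ i, v i * c i = 1 := by
    have hsplit : ∑ i, v i * c i
        = (v j0)⁻¹ * ∑ i, v i * (Pi.single j0 1 : Fin 3 → ℝ) i := by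
      rw [Finset.mul_sum]
      refine Finset.sum_congr rfl fun i _ => by rw [hcdef]; ring
    rw [hsplit, hdotsingle]
    field_simp
  have hab : ∀ s t : ℝ, (∀ i, s * a i + t * b i = 0) → s = 0 ∧ t = 0 := by
    intro s t hst
    have h1 := hst k1
    have h2 := hst k2
    rw [hadef, hbdef] at h1 h2
    simp only [Pi.single_eq_same, Pi.single_eq_of_ne hk1j, Pi.single_eq_of_ne hk12,
      Pi.single_eq_of_ne hk2j, Pi.single_eq_of_ne (Ne.symm hk12), mul_zero, sub_zero,
      mul_one, zero_sub, mul_neg] at h1 h2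
    constructor
    · linarith
    · linarith
  obtain ⟨N, hu, hNv, -⟩ := build_N ha hb hc hab
  exact prime_of_conj hu hNv

/-! ### plane vanishing, transport of order under substitutions -/

lemma plane_vanish {mu a b c : Fin 3 → ℝ} {Q : S3}
    (ha : ∑ i, mu i * a i = 0) (hb : ∑ i, mu i * b i = 0) (hc : ∑ i, mu i * c i = 1)
    (hab : ∀ s t : ℝ, (∀ i, s * a i + t * b i = 0) → s = 0 ∧ t = 0)
    (hQ : ∀ u v : ℝ, MvPolynomial.eval (fun i => u * a i + v * b i) Q = 0) :
    linForm mu ∣ Q := by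
  obtain ⟨N, hu, hNmu, hmv⟩ := build_N ha hb hc hab
  apply dvd_of_conj hu hNmu
  apply X2_dvd
  intro m hm2
  have hrho : rho (linSub N Q) = 0 := by
    apply MvPolynomial.funext
    intro y
    rw [eval_rho, eval_linSub, hmv]
    have hvec : (fun i => (![y 0, y 1, 0] : Fin 3 → ℝ) 0 * a i
        + (![y 0, y 1, 0] : Fin 3 → ℝ) 1 * b i + (![y 0, y 1, 0] : Fin 3 → ℝ) 2 * c i)
        = fun i => y 0 * a i + y 1 * b i := by
      funext i; simp
    rw [hvec, hQ (y 0) (y 1)]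
    simp
  rw [← coeff_rho (linSub N Q) m hm2, hrho]
  simp

lemma linSub_C (N : Matrix (Fin 3) (Fin 3) ℝ) (r : ℝ) :
    linSub N (MvPolynomial.C r) = MvPolynomial.C r := by
  rw [linSub, MvPolynomial.aeval_C, MvPolynomial.algebraMap_eq]

lemma transAt_linSub (N : Matrix (Fin 3) (Fin 3) ℝ) {q y : Fin 3 → ℝ}
    (h : N.mulVec y = q) (F : S3) :
    transAt y (linSub N F) = linSub N (transAt q F) := by
  have hcomp : (transAt y).comp (linSub N) = (linSub N).comp (transAt q) := by
    apply MvPolynomial.algHom_ext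
    intro i
    rw [AlgHom.comp_apply, AlgHom.comp_apply, linSub_X, transAt_linForm, transAt_X, map_add,
      linSub_X, linSub_C]
    congr 1
    rw [← h]
    congr 1
  exact DFunLike.congr_fun hcomp F

lemma rho_C (r : ℝ) : rho (MvPolynomial.C r) = MvPolynomial.C r := by
  rw [rho, MvPolynomial.aeval_C, MvPolynomial.algebraMap_eq]

lemma transAt_rho {q : Fin 3 → ℝ} (h2 : q 2 = 0) (F : S3) :
    transAt q (rho F) = rho (transAt q F) := by
  have hcomp : (transAt q).comp rho = rho.comp (transAt q) := by
    apply MvPolynomial.algHom_ext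
    intro i
    rw [AlgHom.comp_apply, AlgHom.comp_apply, transAt_X, map_add, rho_C]
    have hX : rho (MvPolynomial.X i) = ![MvPolynomial.X 0, MvPolynomial.X 1, 0] i :=
      MvPolynomial.aeval_X _ i
    rw [hX]
    fin_cases i
    · simp [transAt_X]
    · simp [transAt_X]
    · simp [h2]
  exact DFunLike.congr_fun hcomp F

lemma rho_rho (F : S3) : rho (rho F) = rho F := by
  have hcomp : rho.comp rho = rho := by
    apply MvPolynomial.algHom_ext
    intro i
    fin_cases i <;> simp [rho]
  exact DFunLike.congr_fun hcomp F

lemma rho_linForm {v : Fin 3 → ℝ} (hv2 : v 2 = 0) : rho (linForm v) = linForm v := by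
  rw [rho, aeval_linForm, linForm, Fin.sum_univ_three, Fin.sum_univ_three, hv2]
  simp

lemma ordGe_linSub (N : Matrix (Fin 3) (Fin 3) ℝ) {Q : S3} {s : ℕ} (h : ordGe Q s) :
    ordGe (linSub N Q) s :=
  ordGe_aeval (fun i => isHomogeneous_linForm (N i)) h

lemma ordGe_rho {Q : S3} {s : ℕ} (h : ordGe Q s) : ordGe (rho Q) s :=
  ordGe_aeval rho_hom1 h

lemma isHomogeneous_rho {Q : S3} {d : ℕ} (h : Q.IsHomogeneous d) : (rho Q).IsHomogeneous d :=
  isHomogeneous_aeval1 rho_hom1 h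

/-! ### evaluation of homogeneous polynomials at scaled points -/

lemma eval_smul_homog {Q : S3} {d : ℕ} (hQ : Q.IsHomogeneous d) (u : ℝ) (x : Fin 3 → ℝ) :
    MvPolynomial.eval (fun i => u * x i) Q = u ^ d * MvPolynomial.eval x Q := by
  rw [MvPolynomial.eval_eq, MvPolynomial.eval_eq, Finset.mul_sum]
  refine Finset.sum_congr rfl fun m hm => ?_
  have hdeg : ∑ i ∈ m.support, m i = d := by
    have h1 := hQ (MvPolynomial.mem_support_iff.mp hm)
    have h2 : m.degree = d := by rw [Finsupp.degree_eq_weight_one]; exact h1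
    exact h2
  have hprod : ∏ i ∈ m.support, (u * x i) ^ m i
      = u ^ (∑ i ∈ m.support, m i) * ∏ i ∈ m.support, x i ^ m i := by
    rw [← Finset.prod_pow_eq_pow_sum, ← Finset.prod_mul_distrib]
    exact Finset.prod_congr rfl fun i _ => mul_pow _ _ _
  rw [hprod, hdeg]
  ring

lemma linForm_inj {v w : Fin 3 → ℝ} (h : linForm v = linForm w) : v = w := by
  funext i
  rw [← linForm_coeff v i, ← linForm_coeff w i, h]

lemma linForm_not_dvd {v w : Fin 3 → ℝ} (hv : v ≠ 0) (hw : w ≠ 0)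
    (hnp : ∀ c : ℝ, w ≠ c • v) : ¬ linForm v ∣ linForm w := by
  rintro ⟨u, hu⟩
  have hvf : linForm v ≠ 0 := fun hc => hv (linForm_eq_zero_iff.mp hc)
  have hwf : linForm w ≠ 0 := fun hc => hw (linForm_eq_zero_iff.mp hc)
  have hu0 : u ≠ 0 := by rintro rfl; rw [mul_zero] at hu; exact hwf hu
  obtain ⟨e, h1e, hue⟩ := homog_of_dvd (hu ▸ isHomogeneous_linForm w)
    (isHomogeneous_linForm v) hvf hu0
  have he0 : e = 0 := by omega
  subst he0
  have hC : u = MvPolynomial.C (MvPolynomial.coeff 0 u) := by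
    have hm := MvPolynomial.homogeneousComponent_of_mem (m := 0)
      ((MvPolynomial.mem_homogeneousSubmodule 0 u).mpr hue)
    rw [if_pos rfl] at hm
    conv_lhs => rw [← hm, MvPolynomial.homogeneousComponent_zero]
  apply hnp (MvPolynomial.coeff 0 u)
  apply linForm_inj
  rw [← smul_linForm, ← hC, mul_comm]
  exact hu

/-! ### binary factor lemma -/

lemma pow_dvd_cancel {π ψ : S3} (hπ : Prime π) (hnd : ¬ π ∣ ψ) (b : ℕ) :
    ∀ (a : ℕ) (y : S3), π ^ a ∣ ψ ^ b * y → π ^ a ∣ y := by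
  intro a
  induction a with
  | zero => intro y _; simpa using one_dvd y
  | succ a iha =>
      intro y hy
      have hπy : π ∣ y := by
        have h1 : π ∣ ψ ^ b * y := dvd_trans (dvd_pow_self π (Nat.succ_ne_zero a)) hy
        rcases hπ.2.2 _ _ h1 with h | h
        · exact absurd (hπ.dvd_of_dvd_pow h) hnd
        · exact h
      obtain ⟨y', rfl⟩ := hπy
      have h2 : π ^ a ∣ ψ ^ b * y' := by
        have h3 : π ^ (a + 1) ∣ π * (ψ ^ b * y') := by
          rw [show π * (ψ ^ b * y') = ψ ^ b * (π * y') from by ring]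
          exact hy
        rw [pow_succ'] at h3
        exact (mul_dvd_mul_iff_left hπ.ne_zero).mp h3
      rw [pow_succ']
      exact mul_dvd_mul_left π (iha y' h2)

lemma binFactor (alpha beta : ℝ) (hab0 : ¬(alpha = 0 ∧ beta = 0)) :
    ∀ (mm : ℕ) (G : S3) (d : ℕ), G.IsHomogeneous d → rho G = G →
      ordGe (transAt ![alpha, beta, 0] G) mm →
      (linForm ![beta, -alpha, 0]) ^ mm ∣ G := by
  intro mm
  induction mm with
  | zero => intro G d _ _ _; rw [pow_zero]; exact one_dvd G
  | succ m ih =>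
    intro G d hG hrhoG hord
    rcases eq_or_ne G 0 with rfl | hG0
    · exact dvd_zero _
    have hell0 : (![beta, -alpha, 0] : Fin 3 → ℝ) ≠ 0 := by
      intro hc
      have h0 := congr_fun hc 0
      have h1 := congr_fun hc 1
      simp at h0 h1
      exact hab0 ⟨h1, h0⟩
    have hellf : linForm ![beta, -alpha, 0] ≠ 0 := fun hc => hell0 (linForm_eq_zero_iff.mp hc)
    have heval : MvPolynomial.eval ![alpha, beta, 0] G = 0 := by
      rw [← coeff_zero_transAt]
      exact hord 0 (by rw [map_zero]; omega)
    have hsq : alpha * alpha + beta * beta ≠ 0 := by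
      intro hc
      apply hab0
      constructor <;> nlinarith [sq_nonneg alpha, sq_nonneg beta, sq_nonneg (alpha+beta)]
    have ha : ∑ i, (![beta, -alpha, 0] : Fin 3 → ℝ) i * (![alpha, beta, 0] : Fin 3 → ℝ) i
        = 0 := by
      rw [Fin.sum_univ_three]
      simp
      ring
    have hb : ∑ i, (![beta, -alpha, 0] : Fin 3 → ℝ) i * (![0, 0, 1] : Fin 3 → ℝ) i = 0 := by
      rw [Fin.sum_univ_three]
      simp
    have hcc : ∑ i, (![beta, -alpha, 0] : Fin 3 → ℝ) i
        * ((fun j => (alpha * alpha + beta * beta)⁻¹ * (![beta, -alpha, 0] : Fin 3 → ℝ) j) i)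
        = 1 := by
      rw [Fin.sum_univ_three]
      simp
      rw [show beta * ((alpha * alpha + beta * beta)⁻¹ * beta)
          + alpha * ((alpha * alpha + beta * beta)⁻¹ * alpha)
          = (alpha * alpha + beta * beta) * (alpha * alpha + beta * beta)⁻¹ from by ring,
        mul_inv_cancel₀ hsq]
    have hpair : ∀ s t : ℝ, (∀ i, s * (![alpha, beta, 0] : Fin 3 → ℝ) i
        + t * (![0, 0, 1] : Fin 3 → ℝ) i = 0) → s = 0 ∧ t = 0 := by
      intro s t hst
      have h0 := hst 0
      have h1 := hst 1
      have h2 := hst 2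
      simp at h0 h1 h2
      refine ⟨?_, h2⟩
      rcases h0 with hs | hs
      · exact hs
      · rcases h1 with hs' | hs'
        · exact hs'
        · exact absurd ⟨hs, hs'⟩ hab0
    have hQv : ∀ u v : ℝ, MvPolynomial.eval
        (fun i => u * (![alpha, beta, 0] : Fin 3 → ℝ) i
          + v * (![0, 0, 1] : Fin 3 → ℝ) i) G = 0 := by
      intro u v
      have hyv : (fun i => u * (![alpha, beta, 0] : Fin 3 → ℝ) i
          + v * (![0, 0, 1] : Fin 3 → ℝ) i) = ![u * alpha, u * beta, v] := by
        funext i; fin_cases i <;> simp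
      rw [hyv, ← hrhoG, eval_rho]
      have hyv2 : (![(![u * alpha, u * beta, v] : Fin 3 → ℝ) 0,
          (![u * alpha, u * beta, v] : Fin 3 → ℝ) 1, 0] : Fin 3 → ℝ)
          = fun i => u * (![alpha, beta, 0] : Fin 3 → ℝ) i := by
        funext i; fin_cases i <;> simp
      rw [hyv2, eval_smul_homog hG, heval, mul_zero]
    obtain ⟨H, hGH⟩ : linForm ![beta, -alpha, 0] ∣ G := plane_vanish ha hb hcc hpair hQv
    have hH0 : H ≠ 0 := by rintro rfl; rw [mul_zero] at hGH; exact hG0 hGH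
    have hLH : (linForm ![beta, -alpha, 0] * H).IsHomogeneous d := by rw [← hGH]; exact hG
    obtain ⟨e, hde, hHe⟩ := homog_of_dvd hLH (isHomogeneous_linForm _) hellf hH0
    have hre : rho (linForm ![beta, -alpha, 0]) = linForm ![beta, -alpha, 0] :=
      rho_linForm (by simp)
    have hrhoH : rho H = H := by
      apply mul_left_cancel₀ hellf
      have hG2 := hrhoG
      rw [hGH, map_mul, hre] at hG2
      exact hG2
    have htre : transAt ![alpha, beta, 0] (linForm ![beta, -alpha, 0])
        = linForm ![beta, -alpha, 0] := by
      rw [transAt_linForm, ha]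
      simp
    have hordH : ordGe (transAt ![alpha, beta, 0] H) m := by
      apply ordGe_cancel_homog (isHomogeneous_linForm ![beta, -alpha, 0]) hellf
      have hsplit : transAt ![alpha, beta, 0] G
          = linForm ![beta, -alpha, 0] * transAt ![alpha, beta, 0] H := by
        rw [hGH, map_mul, htre]
      rw [← hsplit, show 1 + m = m + 1 from by omega]
      exact hord
    have hpow := ih H e hHe hrhoH hordH
    rw [hGH, pow_succ']
    exact mul_dvd_mul_left _ hpow

/-! ### the line lemma -/

lemma line_dvd {lam : Fin 3 → ℝ} {q1 q2 q3 : Fin 3 → ℝ}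
    (h1 : q1 ≠ 0) (h3 : q3 ≠ 0)
    (h12 : ∀ c : ℝ, q2 ≠ c • q1) (h13 : ∀ c : ℝ, q3 ≠ c • q1) (h23 : ∀ c : ℝ, q3 ≠ c • q2)
    (hq1 : ∑ i, lam i * q1 i = 0) (hq2 : ∑ i, lam i * q2 i = 0) (hq3 : ∑ i, lam i * q3 i = 0)
    (hlam : lam ≠ 0)
    {F : S3} {d mm : ℕ} (hF : F.IsHomogeneous d)
    (ho1 : ordGe (transAt q1 F) mm) (ho2 : ordGe (transAt q2 F) mm)
    (ho3 : ordGe (transAt q3 F) mm) (hdm : d < 3 * mm) : linForm lam ∣ F := by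
  classical
  have hpair : ∀ s t : ℝ, (∀ i, s * q1 i + t * q2 i = 0) → s = 0 ∧ t = 0 := by
    intro s t hst
    rcases eq_or_ne t 0 with rfl | ht
    · refine ⟨?_, rfl⟩
      by_contra hs
      apply h1
      funext i
      have hi := hst i
      have hsq1 : s * q1 i = 0 := by linarith
      rcases mul_eq_zero.mp hsq1 with h | h
      · exact absurd h hs
      · simpa using h
    · exfalso
      apply h12 (-(s / t))
      funext i
      have hi := hst i
      have hq2i : q2 i = -(s / t) * q1 i := by
        field_simp
        linarith
      rw [Pi.smul_apply, smul_eq_mul]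
      exact hq2i
  obtain ⟨j0, hj0⟩ : ∃ j0, lam j0 ≠ 0 := by
    by_contra hc
    push_neg at hc
    exact hlam (funext hc)
  have hcv : ∑ i, lam i * ((fun j => (lam j0)⁻¹ * (Pi.single j0 1 : Fin 3 → ℝ) j) i) = 1 := by
    have hds : ∑ i, lam i * (Pi.single j0 1 : Fin 3 → ℝ) i = lam j0 := by
      rw [Finset.sum_eq_single j0 (fun j _ hjk => by simp [Pi.single_eq_of_ne hjk]) (by simp)]
      simp
    have hsplit : ∑ i, lam i * ((lam j0)⁻¹ * (Pi.single j0 1 : Fin 3 → ℝ) i)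
        = (lam j0)⁻¹ * ∑ i, lam i * (Pi.single j0 1 : Fin 3 → ℝ) i := by
      rw [Finset.mul_sum]
      exact Finset.sum_congr rfl fun i _ => by ring
    rw [hsplit, hds]
    field_simp
  obtain ⟨N, hu, hNlam, hmv⟩ := build_N hq1 hq2 hcv hpair
  set cv : Fin 3 → ℝ := fun j => (lam j0)⁻¹ * (Pi.single j0 1 : Fin 3 → ℝ) j with hcvdef
  set y3 : Fin 3 → ℝ := N⁻¹.mulVec q3 with hy3
  have hNy3 : N.mulVec y3 = q3 := by
    rw [hy3, Matrix.mulVec_mulVec, Matrix.mul_nonsing_inv _ hu, Matrix.one_mulVec]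
  have hy32 : y3 2 = 0 := by
    have hdot : ∑ i, lam i * (N.mulVec y3) i
        = y3 0 * (∑ i, lam i * q1 i) + y3 1 * (∑ i, lam i * q2 i)
          + y3 2 * (∑ i, lam i * cv i) := by
      rw [Finset.mul_sum, Finset.mul_sum, Finset.mul_sum, ← Finset.sum_add_distrib,
        ← Finset.sum_add_distrib]
      refine Finset.sum_congr rfl fun i _ => ?_
      rw [hmv]
      ring
    rw [hNy3, hq3, hq1, hq2] at hdot
    rw [hcvdef] at hdot
    rw [hcv] at hdot
    linarith
  set alpha := y3 0 with halpha
  set beta := y3 1 with hbeta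
  have hq3ab : ∀ i, q3 i = alpha * q1 i + beta * q2 i := by
    intro i
    conv_lhs => rw [← hNy3, hmv]
    rw [hy32]
    ring
  set G := rho (linSub N F) with hGdef
  have hGhom : G.IsHomogeneous d := isHomogeneous_rho (isHomogeneous_linSub N hF)
  have hrhoG : rho G = G := rho_rho _
  have hordG : ∀ (y q : Fin 3 → ℝ), y 2 = 0 → N.mulVec y = q → ordGe (transAt q F) mm →
      ordGe (transAt y G) mm := by
    intro y q hy2 hNq hoq
    rw [hGdef, transAt_rho hy2, transAt_linSub N hNq]
    exact ordGe_rho (ordGe_linSub N hoq)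
  have hNe1 : N.mulVec ![1, 0, 0] = q1 := by
    rw [hmv]; funext i; simp
  have hNe2 : N.mulVec ![0, 1, 0] = q2 := by
    rw [hmv]; funext i; simp
  have hNy3' : N.mulVec ![alpha, beta, 0] = q3 := by
    rw [hmv]; funext i; rw [hq3ab i]; simp
  have hd1 := binFactor 1 0 (by simp) mm G d hGhom hrhoG
    (hordG ![1, 0, 0] q1 (by simp) hNe1 ho1)
  have hd2 := binFactor 0 1 (by simp) mm G d hGhom hrhoG
    (hordG ![0, 1, 0] q2 (by simp) hNe2 ho2)
  rw [show (![(1:ℝ), -0, 0] : Fin 3 → ℝ) = ![(1:ℝ), 0, 0] from by norm_num] at hd2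
  have hab3 : ¬(alpha = 0 ∧ beta = 0) := by
    rintro ⟨ha0, hb0⟩
    apply h3
    funext i
    rw [hq3ab i, ha0, hb0]
    simp
  have hd3 := binFactor alpha beta hab3 mm G d hGhom hrhoG
    (hordG ![alpha, beta, 0] q3 (by simp) hNy3' ho3)
  -- now show G = 0
  have hGzero : G = 0 := by
    by_contra hG0
    have hv1 : (![(0:ℝ), -1, 0] : Fin 3 → ℝ) ≠ 0 := by
      intro hc; have := congr_fun hc 1; simp at this
    have hv2 : (![(1:ℝ), 0, 0] : Fin 3 → ℝ) ≠ 0 := by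
      intro hc; have := congr_fun hc 0; simp at this
    have hv3 : (![beta, -alpha, 0] : Fin 3 → ℝ) ≠ 0 := by
      intro hc
      have hc0 := congr_fun hc 0
      have hc1 := congr_fun hc 1
      simp at hc0 hc1
      exact hab3 ⟨hc1, hc0⟩
    have hl1f : linForm ![(0:ℝ), -1, 0] ≠ 0 := fun hcf => hv1 (linForm_eq_zero_iff.mp hcf)
    have hl2f : linForm ![(1:ℝ), 0, 0] ≠ 0 := fun hcf => hv2 (linForm_eq_zero_iff.mp hcf)
    have hl3f : linForm ![beta, -alpha, 0] ≠ 0 := fun hcf => hv3 (linForm_eq_zero_iff.mp hcf)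
    have hp1 : Prime (linForm ![(0:ℝ), -1, 0]) := prime_linForm hv1
    have hp2 : Prime (linForm ![(1:ℝ), 0, 0]) := prime_linForm hv2
    -- non-proportionality of the dual coordinate forms
    have h21v : ∀ c : ℝ, (![(1:ℝ), 0, 0] : Fin 3 → ℝ) ≠ c • ![(0:ℝ), -1, 0] := by
      intro c hcf
      have := congr_fun hcf 0
      simp at this
    have h31v : ∀ c : ℝ, (![beta, -alpha, 0] : Fin 3 → ℝ) ≠ c • ![(0:ℝ), -1, 0] := by
      intro c hcf
      have hc0 := congr_fun hcf 0
      simp at hc0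
      -- beta = 0, so q3 = alpha • q1
      apply h13 alpha
      funext i
      rw [Pi.smul_apply, smul_eq_mul, hq3ab i, hc0]
      ring
    have h32v : ∀ c : ℝ, (![beta, -alpha, 0] : Fin 3 → ℝ) ≠ c • ![(1:ℝ), 0, 0] := by
      intro c hcf
      have hc1 := congr_fun hcf 1
      simp at hc1
      apply h23 beta
      funext i
      rw [Pi.smul_apply, smul_eq_mul, hq3ab i, hc1]
      ring
    have hnd21 : ¬ linForm ![(0:ℝ), -1, 0] ∣ linForm ![(1:ℝ), 0, 0] :=
      linForm_not_dvd hv1 hv2 h21v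
    have hnd31 : ¬ linForm ![(0:ℝ), -1, 0] ∣ linForm ![beta, -alpha, 0] :=
      linForm_not_dvd hv1 hv3 h31v
    have hnd32 : ¬ linForm ![(1:ℝ), 0, 0] ∣ linForm ![beta, -alpha, 0] :=
      linForm_not_dvd hv2 hv3 h32v
    -- extract the product
    obtain ⟨w3, hw3⟩ := hd3
    have hdw2 : (linForm ![(1:ℝ), 0, 0]) ^ mm ∣ w3 := by
      apply pow_dvd_cancel hp2 hnd32 mm mm
      rw [← hw3]
      exact hd2
    obtain ⟨w2, hw2⟩ := hdw2
    have hdw1 : (linForm ![(0:ℝ), -1, 0]) ^ mm ∣ w2 := by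
      apply pow_dvd_cancel hp1 hnd31 mm mm
      apply pow_dvd_cancel hp1 hnd21 mm mm
      rw [show linForm ![(1:ℝ), 0, 0] ^ mm * (linForm ![beta, -alpha, 0] ^ mm * w2)
          = linForm ![beta, -alpha, 0] ^ mm * (linForm ![(1:ℝ), 0, 0] ^ mm * w2) from by ring,
        ← hw2, ← hw3]
      exact hd1
    obtain ⟨w1, hw1⟩ := hdw1
    -- degree contradiction
    have hD : G = (linForm ![beta, -alpha, 0] ^ mm * (linForm ![(1:ℝ), 0, 0] ^ mm
        * linForm ![(0:ℝ), -1, 0] ^ mm)) * w1 := by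
      rw [hw3, hw2, hw1]; ring
    have hDhom : (linForm ![beta, -alpha, 0] ^ mm * (linForm ![(1:ℝ), 0, 0] ^ mm
        * linForm ![(0:ℝ), -1, 0] ^ mm)).IsHomogeneous (1 * mm + (1 * mm + 1 * mm)) :=
      ((isHomogeneous_linForm _).pow mm).mul
        (((isHomogeneous_linForm _).pow mm).mul ((isHomogeneous_linForm _).pow mm))
    have hD0 : (linForm ![beta, -alpha, 0] ^ mm * (linForm ![(1:ℝ), 0, 0] ^ mm
        * linForm ![(0:ℝ), -1, 0] ^ mm)) ≠ 0 :=
      mul_ne_zero (pow_ne_zero _ hl3f) (mul_ne_zero (pow_ne_zero _ hl2f) (pow_ne_zero _ hl1f))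
    have hw10 : w1 ≠ 0 := by
      rintro rfl
      rw [mul_zero] at hD
      exact hG0 hD
    have hDG : ((linForm ![beta, -alpha, 0] ^ mm * (linForm ![(1:ℝ), 0, 0] ^ mm
        * linForm ![(0:ℝ), -1, 0] ^ mm)) * w1).IsHomogeneous d := by
      rw [← hD]; exact hGhom
    obtain ⟨e, hde, -⟩ := homog_of_dvd hDG hDhom hD0 hw10
    omega
  -- conclude : F vanishes on the whole plane of lam
  have hQF : ∀ u v : ℝ, MvPolynomial.eval (fun i => u * q1 i + v * q2 i) F = 0 := by
    intro u v
    have hvec : (fun i => u * q1 i + v * q2 i) = N.mulVec ![u, v, 0] := by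
      rw [hmv]; funext i; simp
    rw [hvec, ← eval_linSub]
    have heq : MvPolynomial.eval ![u, v, 0] (linSub N F)
        = MvPolynomial.eval ![u, v, 0] G := by
      rw [hGdef, eval_rho]
      congr 1
    rw [heq, hGzero]
    simp
  exact plane_vanish hq1 hq2 hcv hpair hQF

/-! ### combining the lines : main induction -/

def Bfun (n : ℕ) : ℕ → ℕ
  | 0 => 0
  | s + 1 => min (6 * (s + 1)) (n + Bfun n s)

lemma prod_dvd_of_primes {ι : Type} [DecidableEq ι] (T : Finset ι) (g : ι → S3)
    (hg : ∀ j, Prime (g j)) (hnd : ∀ j j', j ≠ j' → ¬ g j ∣ g j')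
    {F : S3} (hdvd : ∀ j, g j ∣ F) : (∏ j ∈ T, g j) ∣ F := by
  induction T using Finset.induction_on with
  | empty => simpa using one_dvd F
  | @insert j T hjT ih =>
      obtain ⟨y, hy⟩ := ih
      have hjy : g j ∣ y := by
        have hstep : ∀ T' : Finset ι, (∀ t ∈ T', t ≠ j) → ∀ z : S3,
            g j ∣ (∏ t ∈ T', g t) * z → g j ∣ z := by
          intro T'
          induction T' using Finset.induction_on with
          | empty => intro _ z hz; simpa using hz
          | @insert t T'' htT'' ih' =>
              intro hne z hz
              rw [Finset.prod_insert htT'', mul_assoc] at hz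
              rcases (hg j).2.2 _ _ hz with h | h
              · exact absurd h (hnd j t (Ne.symm (hne t (Finset.mem_insert_self _ _))))
              · exact ih' (fun t' ht' => hne t' (Finset.mem_insert_of_mem ht')) z h
        have hj' := hdvd j
        rw [hy] at hj'
        exact hstep T (fun t ht hc => hjT (hc ▸ ht)) y hj'
      obtain ⟨y', rfl⟩ := hjy
      exact ⟨y', by rw [Finset.prod_insert hjT, hy]; ring⟩

lemma prod_linForm_hom {n : ℕ} (lam : Fin n → (Fin 3 → ℝ)) :
    (∏ j, linForm (lam j)).IsHomogeneous n := by
  have h := MvPolynomial.IsHomogeneous.prod Finset.univ (fun j => linForm (lam j)) (fun _ => 1)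
    (fun j _ => isHomogeneous_linForm (lam j))
  simpa using h

lemma main_bound {k n : ℕ} {p : Fin k → (Fin 3 → ℝ)} {lam : Fin n → (Fin 3 → ℝ)}
    (hDV : DualVertexStar p lam) :
    ∀ (s : ℕ) (d : ℕ) (F : S3), F ≠ 0 → F.IsHomogeneous d →
      (∀ i, ordGe (transAt (p i) F) (2 * s)) → Bfun n s ≤ d := by
  classical
  obtain ⟨⟨hp0, hpnp⟩, ⟨hl0, hlnp⟩, hn4, hexact2, hge3⟩ := hDV
  intro s
  induction s with
  | zero => intro d F _ _ _; exact Nat.zero_le d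
  | succ s ih =>
    intro d F hF0 hFd hord
    rcases le_or_gt (6 * (s + 1)) d with h6 | h6
    · exact le_trans (min_le_left _ _) h6
    have hdvd : ∀ j, linForm (lam j) ∣ F := by
      intro j
      obtain ⟨T, hTsub, hTcard⟩ := Finset.exists_subset_card_eq (hge3 j)
      obtain ⟨i1, i2, i3, h12, h13, h23, hTeq⟩ := Finset.card_eq_three.mp hTcard
      have hmemT : ∀ i ∈ T, ∑ t, lam j t * p i t = 0 := by
        intro i hi
        have hmem := hTsub hi
        rw [Finset.mem_filter] at hmem
        have h0 := hmem.2
        rw [eval_linForm] at h0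
        exact h0
      have e1 : ∑ t, lam j t * p i1 t = 0 := hmemT i1 (by rw [hTeq]; simp)
      have e2 : ∑ t, lam j t * p i2 t = 0 := hmemT i2 (by rw [hTeq]; simp)
      have e3 : ∑ t, lam j t * p i3 t = 0 := hmemT i3 (by rw [hTeq]; simp)
      exact line_dvd (hp0 i1) (hp0 i3) (fun c => hpnp i1 i2 h12 c) (fun c => hpnp i1 i3 h13 c)
        (fun c => hpnp i2 i3 h23 c) e1 e2 e3 (hl0 j) hFd (hord i1) (hord i2) (hord i3)
        (by omega)
    have hprod : (∏ j, linForm (lam j)) ∣ F :=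
      prod_dvd_of_primes Finset.univ (fun j => linForm (lam j))
        (fun j => prime_linForm (hl0 j))
        (fun j j' hjj' => linForm_not_dvd (hl0 j) (hl0 j') (fun c => hlnp j j' hjj' c))
        hdvd
    obtain ⟨G, hFG⟩ := hprod
    have hG0 : G ≠ 0 := by rintro rfl; rw [mul_zero] at hFG; exact hF0 hFG
    have hL0 : (∏ j, linForm (lam j)) ≠ 0 := by
      apply Finset.prod_ne_zero_iff.mpr
      exact fun j _ hc => hl0 j (linForm_eq_zero_iff.mp hc)
    have hFLG : ((∏ j, linForm (lam j)) * G).IsHomogeneous d := by rw [← hFG]; exact hFd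
    obtain ⟨e, hne, hGe⟩ := homog_of_dvd hFLG (prod_linForm_hom lam) hL0 hG0
    have hordG : ∀ i, ordGe (transAt (p i) G) (2 * s) := by
      intro i
      have hcard : (Finset.univ.filter
          fun j => MvPolynomial.eval (p i) (linForm (lam j)) = 0).card = 2 := by
        have h2 := hexact2 i
        convert h2 using 2
      set fil := Finset.univ.filter
        (fun j => MvPolynomial.eval (p i) (linForm (lam j)) = 0) with hfil
      set fil2 := Finset.univ.filter
        (fun j => ¬ MvPolynomial.eval (p i) (linForm (lam j)) = 0) with hfil2
      have hsplitprod : (∏ j ∈ fil, linForm (lam j)) * (∏ j ∈ fil2, linForm (lam j))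
          = ∏ j, linForm (lam j) :=
        Finset.prod_filter_mul_prod_filter_not Finset.univ _ _
      have hfil_id : ∀ j ∈ fil, transAt (p i) (linForm (lam j)) = linForm (lam j) := by
        intro j hj
        rw [hfil, Finset.mem_filter] at hj
        have h0 := hj.2
        rw [eval_linForm] at h0
        rw [transAt_linForm, h0]
        simp
      have htf : transAt (p i) F = (∏ j ∈ fil, linForm (lam j))
          * ((∏ j ∈ fil2, transAt (p i) (linForm (lam j))) * transAt (p i) G) := by
        rw [hFG, map_mul, ← hsplitprod, map_mul, map_prod, map_prod]
        rw [Finset.prod_congr rfl hfil_id]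
        ring
      have hAhom : (∏ j ∈ fil, linForm (lam j)).IsHomogeneous 2 := by
        have h := MvPolynomial.IsHomogeneous.prod fil (fun j => linForm (lam j)) (fun _ => 1)
          (fun j _ => isHomogeneous_linForm (lam j))
        rw [Finset.sum_const, hcard] at h
        simpa using h
      have hA0 : (∏ j ∈ fil, linForm (lam j)) ≠ 0 := by
        apply Finset.prod_ne_zero_iff.mpr
        exact fun j _ hc => hl0 j (linForm_eq_zero_iff.mp hc)
      have hM : MvPolynomial.constantCoeff
          (∏ j ∈ fil2, transAt (p i) (linForm (lam j))) ≠ 0 := by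
        rw [map_prod]
        apply Finset.prod_ne_zero_iff.mpr
        intro j hj
        rw [constantCoeff_transAt]
        rw [hfil2, Finset.mem_filter] at hj
        exact hj.2
      have hox := hord i
      rw [htf, show 2 * (s + 1) = 2 + 2 * s from by omega] at hox
      exact ordGe_cancel_const hM (ordGe_cancel_homog hAhom hA0 hox)
    have hdke := ih e G hG0 hGe hordG
    calc Bfun n (s + 1) ≤ n + Bfun n s := min_le_right _ _
      _ ≤ d := by omega

lemma Bfun_ge {n : ℕ} (hn : 4 ≤ n) :
    ∀ s : ℕ, 1 ≤ s → min (6 * s - 3) ((s - 1) * n + 3) ≤ Bfun n s := by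
  intro s
  induction s with
  | zero => omega
  | succ s ih =>
      intro _
      rcases Nat.eq_zero_or_pos s with rfl | hs
      · simp [Bfun]
        omega
      · have hih := ih hs
        have hmul : (s - 1) * n + n = s * n := by
          have hsucc : s - 1 + 1 = s := Nat.succ_pred_eq_of_pos hs
          calc (s - 1) * n + n = ((s - 1) + 1) * n := by ring
            _ = s * n := by rw [hsucc]
        have hgoalmul : (s + 1 - 1) * n = s * n := by simp
        rcases le_or_gt n 6 with hn6 | hn6
        · have hsn : s * n ≤ s * 6 := Nat.mul_le_mul_left s hn6
          have hsn' : (s - 1) * n ≤ (s - 1) * 6 := Nat.mul_le_mul_left (s - 1) hn6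
          show min (6 * (s+1) - 3) ((s + 1 - 1) * n + 3) ≤ min (6 * (s + 1)) (n + Bfun n s)
          rw [hgoalmul]
          omega
        · have hsn : s * 6 ≤ s * n := Nat.mul_le_mul_left s (le_of_lt hn6)
          have hsn' : (s - 1) * 6 ≤ (s - 1) * n := Nat.mul_le_mul_left (s - 1) (le_of_lt hn6)
          show min (6 * (s+1) - 3) ((s + 1 - 1) * n + 3) ≤ min (6 * (s + 1)) (n + Bfun n s)
          rw [hgoalmul]
          omega

lemma witness {k n : ℕ} {p : Fin k → (Fin 3 → ℝ)} {lam : Fin n → (Fin 3 → ℝ)}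
    (hDV : DualVertexStar p lam) (s : ℕ) :
    ∃ F : S3, F ≠ 0 ∧ F.IsHomogeneous (n * s) ∧ ∀ i, VanishesToOrder F (p i) (2 * s) := by
  classical
  obtain ⟨⟨hp0, hpnp⟩, ⟨hl0, hlnp⟩, hn4, hexact2, hge3⟩ := hDV
  refine ⟨(∏ j, linForm (lam j)) ^ s, ?_, ?_, ?_⟩
  · apply pow_ne_zero
    apply Finset.prod_ne_zero_iff.mpr
    exact fun j _ hc => hl0 j (linForm_eq_zero_iff.mp hc)
  · exact (prod_linForm_hom lam).pow s
  · intro i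
    rw [vanishes_iff_ordGe]
    have hcard : (Finset.univ.filter
        fun j => MvPolynomial.eval (p i) (linForm (lam j)) = 0).card = 2 := by
      have h2 := hexact2 i
      convert h2 using 2
    set fil := Finset.univ.filter
      (fun j => MvPolynomial.eval (p i) (linForm (lam j)) = 0) with hfil
    set fil2 := Finset.univ.filter
      (fun j => ¬ MvPolynomial.eval (p i) (linForm (lam j)) = 0) with hfil2
    have hsplitprod : (∏ j ∈ fil, linForm (lam j)) * (∏ j ∈ fil2, linForm (lam j))
        = ∏ j, linForm (lam j) :=
      Finset.prod_filter_mul_prod_filter_not Finset.univ _ _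
    have hfil_id : ∀ j ∈ fil, transAt (p i) (linForm (lam j)) = linForm (lam j) := by
      intro j hj
      rw [hfil, Finset.mem_filter] at hj
      have h0 := hj.2
      rw [eval_linForm] at h0
      rw [transAt_linForm, h0]
      simp
    have htf : transAt (p i) ((∏ j, linForm (lam j)) ^ s)
        = ((∏ j ∈ fil, linForm (lam j)) ^ s)
          * ((∏ j ∈ fil2, transAt (p i) (linForm (lam j))) ^ s) := by
      rw [map_pow, ← hsplitprod, map_mul, map_prod, map_prod]
      rw [Finset.prod_congr rfl hfil_id, mul_pow]
    rw [htf]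
    have hAhom : (∏ j ∈ fil, linForm (lam j)).IsHomogeneous 2 := by
      have h := MvPolynomial.IsHomogeneous.prod fil (fun j => linForm (lam j)) (fun _ => 1)
        (fun j _ => isHomogeneous_linForm (lam j))
      rw [Finset.sum_const, hcard] at h
      simpa using h
    have hpowhom : ((∏ j ∈ fil, linForm (lam j)) ^ s).IsHomogeneous (2 * s) := hAhom.pow s
    exact ordGe_mul_left' hpowhom _

end Star5

/-- symbolic power initial degree bound for a dual vertex-star configuration:
for every `s ≥ 1`, `α_{2s}(X) ≥ min {6s − 3, (s − 1)·n + 3}`; that is, every nonzero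
homogeneous polynomial vanishing to order `≥ 2s` at all the `p i` has degree at least
`min {6s − 3, (s − 1)·n + 3}`. -/
theorem statement5 {k n : ℕ} (p : Fin k → (Fin 3 → ℝ)) (lam : Fin n → (Fin 3 → ℝ))
    (h : DualVertexStar p lam) :
    ∀ s : ℕ, 1 ≤ s →
      min (6 * s - 3) ((s - 1) * n + 3) ≤ alphaDeg p (2 * s) ∧
      ∀ (d : ℕ) (F : S3), F ≠ 0 → F.IsHomogeneous d →
        (∀ i, VanishesToOrder F (p i) (2 * s)) →
        min (6 * s - 3) ((s - 1) * n + 3) ≤ d := by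
  intro s hs
  have hn4 : 4 ≤ n := h.2.2.1
  have key : ∀ (d : ℕ) (F : S3), F ≠ 0 → F.IsHomogeneous d →
      (∀ i, VanishesToOrder F (p i) (2 * s)) → min (6 * s - 3) ((s - 1) * n + 3) ≤ d := by
    intro d F hF0 hFd hvan
    have hord : ∀ i, Star5.ordGe (Star5.transAt (p i) F) (2 * s) :=
      fun i => (Star5.vanishes_iff_ordGe F (p i) (2 * s)).mp (hvan i)
    exact le_trans (Star5.Bfun_ge hn4 s hs) (Star5.main_bound h s d F hF0 hFd hord)
  refine ⟨?_, key⟩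
  obtain ⟨F0, hF00, hF0h, hF0v⟩ := Star5.witness h s
  have hne : {d : ℕ | ∃ F : S3, F ≠ 0 ∧ F.IsHomogeneous d ∧
      ∀ i, VanishesToOrder F (p i) (2 * s)}.Nonempty :=
    ⟨n * s, F0, hF00, hF0h, hF0v⟩
  have hmem : alphaDeg p (2 * s) ∈ {d : ℕ | ∃ F : S3, F ≠ 0 ∧ F.IsHomogeneous d ∧
      ∀ i, VanishesToOrder F (p i) (2 * s)} := Nat.sInf_mem hne
  obtain ⟨F, hF0', hFh, hFv⟩ := hmem
  exact key _ F hF0' hFh hFv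

end
end

section
/- Let r ≥ 0, n ≥ 2 and d ≥ r be integers. Set t = min(n, r+2), q = ⌊t(r+1)/(t−1)⌋, a = t(r+1) − (t−1)q and b = t − 1 − a. Then t·C(d+1−r, 2) − a·C(d+1−q, 2) − b·C(d+2−q, 2) = C(d+2, 2) − C(r+2, 2) − Σ_{j=1}^{d−r} max(0, r + j + 1 − n·j). -/
open MvPolynomial

noncomputable section

lemma c2succ (m : ℤ) : choose2 (m+1) = choose2 m + max 0 m := by
  unfold choose2
  obtain ⟨c, hc⟩ : Even ((m-1)*m) := by
    have := Int.even_mul_succ_self (m-1); simpa using this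
  rcases le_or_gt m 0 with h | h
  · rw [if_pos (by omega), if_pos (by omega), max_eq_left h]; ring
  rcases eq_or_lt_of_le (Int.add_one_le_of_lt h) with h1 | h2
  · rw [← h1]; norm_num
  · rw [max_eq_right h.le, if_neg (by omega), if_neg (by omega)]
    have e1 : m*(m-1) = 2*c := by linarith [hc]
    have e2 : (m+1)*(m+1-1) = 2*(c+m) := by nlinarith [hc]
    rw [e1, e2, Int.mul_ediv_cancel_left _ two_ne_zero,
      Int.mul_ediv_cancel_left _ two_ne_zero]

lemma c2zero (m : ℤ) (h : m ≤ 1) : choose2 m = 0 := by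
  unfold choose2; rw [if_pos (by omega)]

lemma stepId (t q a b r n d : ℤ) (hr0 : 0 ≤ r) (ht2 : 2 ≤ t)
    (hE : (t-1)*q + a = t*(r+1)) (ha0 : 0 ≤ a) (haU : a ≤ t-2)
    (hab : a + b = t-1) (hd : r ≤ d)
    (hcase : t = n ∨ (t = r+2 ∧ t ≤ n)) :
    t * max 0 (d+1-r) - a * max 0 (d+1-q) - b * max 0 (d+2-q)
      = max 0 (d+2) - max 0 (d + 2 - n*(d-r+1)) := by
  rw [max_eq_right (by omega : (0:ℤ) ≤ d+1-r), max_eq_right (by omega : (0:ℤ) ≤ d+2)]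
  rcases hcase with htn | ⟨htr, htn⟩
  · subst htn
    rcases le_or_gt d (q-2) with h1 | h1
    · rw [max_eq_left (by omega : d+1-q ≤ 0), max_eq_left (by omega : d+2-q ≤ 0),
        max_eq_right (by nlinarith [mul_le_mul_of_nonneg_left h1 (by omega : (0:ℤ) ≤ t-1)] :
          (0:ℤ) ≤ d + 2 - t*(d-r+1))]
      ring
    rcases eq_or_lt_of_le (Int.add_one_le_of_lt h1) with h2 | h2
    · have hv : d + 2 - t*(d-r+1) = -b := by linear_combination -hE + hab + (t-1)*h2
      rw [max_eq_left (by omega : d+1-q ≤ 0), max_eq_right (by omega : (0:ℤ) ≤ d+2-q),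
        hv, max_eq_left (by omega : -b ≤ 0)]
      linear_combination hE - hab - (t-b-1)*h2
    · rw [max_eq_right (by omega : (0:ℤ) ≤ d+1-q), max_eq_right (by omega : (0:ℤ) ≤ d+2-q),
        max_eq_left (by nlinarith [mul_le_mul_of_nonneg_left h2.le (by omega : (0:ℤ) ≤ t-1)] :
          d + 2 - t*(d-r+1) ≤ 0)]
      linear_combination hE + (q - d - 2) * hab
  · have key : a = (r+1)*(r+2-q) := by linear_combination hE + (r+1-q)*htr
    have hq : q = r + 2 := by
      rcases lt_trichotomy q (r+2) with h | h | h
      · nlinarith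
      · exact h
      · nlinarith
    have ha : a = 0 := by rw [hq] at key; simpa using key
    subst hq ha htr
    have h3 : (r+2)*(d-r+1) ≤ n*(d-r+1) :=
      mul_le_mul_of_nonneg_right htn (by omega : (0:ℤ) ≤ d-r+1)
    have h4 : (0:ℤ) ≤ (r+1)*(d-r) := mul_nonneg (by omega) (by omega)
    have hm : d + 2 - n*(d-r+1) ≤ 0 := by nlinarith
    rw [max_eq_right (by omega : (0:ℤ) ≤ d+2-(r+2)), max_eq_left hm]
    linear_combination -(d-r)*hab


/-- equivalence of the two forms of the edge-ideal dimension count: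
with `t = min(n, r+2)`, `q = ⌊t(r+1)/(t−1)⌋`, `a = t(r+1) − (t−1)q`, `b = t−1−a`,
for `d ≥ r` one has
`t·C(d+1−r,2) − a·C(d+1−q,2) − b·C(d+2−q,2)
  = C(d+2,2) − C(r+2,2) − Σ_{j=1}^{d−r} max(0, r + j + 1 − n·j)`. -/
theorem statement8 (r n d : ℕ) (hn : 2 ≤ n) (hd : r ≤ d)
    (t q a b : ℕ)
    (ht : t = min n (r + 2)) (hq : q = t * (r + 1) / (t - 1))
    (ha : a = t * (r + 1) - (t - 1) * q) (hb : b = t - 1 - a) :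
    (t : ℤ) * choose2 ((d : ℤ) + 1 - r) - (a : ℤ) * choose2 ((d : ℤ) + 1 - q)
        - (b : ℤ) * choose2 ((d : ℤ) + 2 - q)
      = choose2 ((d : ℤ) + 2) - choose2 ((r : ℤ) + 2)
        - ∑ j ∈ Finset.Icc 1 (d - r), max 0 ((r : ℤ) + (j : ℤ) + 1 - (n : ℤ) * (j : ℤ)) := by
  have ht2 : 2 ≤ t := by omega
  have key := Nat.div_add_mod (t * (r+1)) (t-1)
  rw [← hq] at key
  have hmlt : t * (r+1) % (t-1) < t - 1 := Nat.mod_lt _ (by omega)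
  set P := t * (r+1) with hP
  set Q := (t-1) * q with hQ
  set M := P % (t-1) with hM
  have hNat : Q + a = P := by omega
  have haU : a + 2 ≤ t := by omega
  have hE : ((t:ℤ)-1)*q + a = t*((r:ℤ)+1) := by
    have := hNat
    rw [hQ, hP] at this
    zify [show 1 ≤ t by omega] at this
    linarith [this]
  have hab : (a:ℤ) + b = (t:ℤ)-1 := by omega
  have haU' : (a:ℤ) ≤ (t:ℤ)-2 := by omega
  have hcase : (t:ℤ) = n ∨ ((t:ℤ) = (r:ℤ)+2 ∧ (t:ℤ) ≤ n) := by omega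
  have hq2 : (r:ℤ)+2 ≤ q := by
    by_contra h
    push_neg at h
    have h5 : ((t:ℤ)-1)*q ≤ ((t:ℤ)-1)*((r:ℤ)+1) :=
      mul_le_mul_of_nonneg_left (by omega) (by omega)
    have htr : (t:ℤ) ≤ (r:ℤ)+2 := by omega
    nlinarith
  clear key hmlt hNat hq ha hb hP hQ hM
  induction d, hd using Nat.le_induction with
  | base =>
    rw [Nat.sub_self]
    rw [show Finset.Icc 1 0 = ∅ from rfl, Finset.sum_empty]
    rw [c2zero _ (by omega : (r:ℤ)+1-r ≤ 1), c2zero _ (by omega : (r:ℤ)+1-q ≤ 1),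
      c2zero _ (by omega : (r:ℤ)+2-q ≤ 1)]
    ring
  | succ d hd ih =>
    have hs := stepId t q a b r n d (by omega) (by omega) hE (by omega) haU' hab
      (by omega) hcase
    have hsub : d + 1 - r = (d - r) + 1 := by omega
    rw [hsub, Finset.sum_Icc_succ_top (by omega : 1 ≤ d - r + 1)]
    push_cast [Nat.cast_sub hd]
    rw [show (d:ℤ) + 1 + 1 - r = ((d:ℤ)+1-r)+1 by ring, c2succ,
      show (d:ℤ) + 1 + 1 - q = ((d:ℤ)+1-q)+1 by ring, c2succ,
      show (d:ℤ) + 1 + 2 - q = ((d:ℤ)+2-q)+1 by ring, c2succ,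
      show (d:ℤ) + 1 + 2 = ((d:ℤ)+2)+1 by ring, c2succ]
    rw [show (r:ℤ) + ((d:ℤ) - r + 1) + 1 - n * ((d:ℤ) - r + 1)
        = (d:ℤ) + 2 - n*((d:ℤ)-r+1) by ring]
    linear_combination ih + hs

end
end

section
/- Let r ≥ 0 be an integer and K = ⌊(r+1)/3⌋. If g ∈ ℝ[x,y,z] is a nonzero homogeneous polynomial such that g·y^{r+1} belongs to the ideal ⟨x^{r+1}, (x−y)^{r+1}⟩ and g belongs to the ideal ⟨y, z⟩^K, then 2·deg(g) ≥ ⌊(4r+1)/3⌋. -/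
open MvPolynomial

noncomputable section

/-- Key univariate lemma: if `(X-1)^N` divides a nonzero polynomial `f`,
then `N < #f.support`. -/
lemma st9_key : ∀ (k : ℕ) (f : Polynomial ℝ), f.support.card ≤ k →
    ∀ N : ℕ, (Polynomial.X - 1) ^ N ∣ f → f ≠ 0 → N < f.support.card := by
  intro k
  induction k with
  | zero =>
    intro f hcard N _ hf0
    have : f.support.Nonempty := Polynomial.nonempty_support_iff.mpr hf0
    have := Finset.card_pos.mpr this
    omega
  | succ k ih =>
    intro f hcard N hdvd hf0
    have hpos : 0 < f.support.card :=
      Finset.card_pos.mpr (Polynomial.nonempty_support_iff.mpr hf0)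
    match N with
    | 0 => exact hpos
    | (M+1) =>
      obtain ⟨e0, he0⟩ := Polynomial.nonempty_support_iff.mpr hf0
      have hX1 : (Polynomial.X - 1 : Polynomial ℝ) ∣ f :=
        dvd_trans (dvd_pow_self _ (Nat.succ_ne_zero M)) hdvd
      set g : Polynomial ℝ :=
        Polynomial.X * Polynomial.derivative f - Polynomial.C (e0 : ℝ) * f with hg
      have hcoeff : ∀ i : ℕ, g.coeff i = f.coeff i * ((i : ℝ) - (e0 : ℝ)) := by
        intro i
        match i with
        | 0 => simp [hg, Polynomial.mul_coeff_zero, Polynomial.coeff_C_mul]; ring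
        | (i+1) =>
          simp [hg, Polynomial.coeff_X_mul, Polynomial.coeff_derivative,
            Polynomial.coeff_C_mul]
          ring
      have hsub : g.support ⊆ f.support.erase e0 := by
        intro i hi
        rw [Polynomial.mem_support_iff] at hi
        rw [hcoeff i] at hi
        have h1 : f.coeff i ≠ 0 := fun h => hi (by rw [h]; ring)
        have h2 : (i:ℝ) ≠ (e0:ℝ) := fun h => hi (by rw [h]; ring)
        have h3 : i ≠ e0 := fun h => h2 (by rw [h])
        exact Finset.mem_erase.mpr ⟨h3, Polynomial.mem_support_iff.mpr h1⟩
      by_cases hne : (f.support.erase e0).Nonempty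
      · -- g ≠ 0 and (X-1)^M ∣ g, apply IH
        obtain ⟨i0, hi0⟩ := hne
        have hi0' := Finset.mem_erase.mp hi0
        have hg0 : g ≠ 0 := by
          intro h
          have := hcoeff i0
          rw [h] at this
          simp only [Polynomial.coeff_zero] at this
          have h1 : f.coeff i0 ≠ 0 := Polynomial.mem_support_iff.mp hi0'.2
          have h2 : ((i0:ℝ) - (e0:ℝ)) ≠ 0 := by
            have : (i0:ℝ) ≠ (e0:ℝ) := by exact_mod_cast hi0'.1
            exact sub_ne_zero_of_ne this
          exact (mul_ne_zero h1 h2) this.symm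
        obtain ⟨h₁, hh⟩ := hdvd
        have hdf : (Polynomial.X - 1 : Polynomial ℝ) ^ M ∣ Polynomial.derivative f := by
          refine Dvd.intro (Polynomial.C ((M:ℝ)+1) * h₁ + (Polynomial.X - 1) * Polynomial.derivative h₁) ?_
          rw [hh, Polynomial.derivative_mul, Polynomial.derivative_pow]
          simp only [Polynomial.derivative_sub, Polynomial.derivative_X,
            Polynomial.derivative_one, sub_zero, mul_one, Nat.add_sub_cancel,
            Nat.cast_add, Nat.cast_one]
          ring
        have hfM : (Polynomial.X - 1 : Polynomial ℝ) ^ M ∣ f :=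
          dvd_trans (pow_dvd_pow _ (Nat.le_succ M)) ⟨h₁, hh⟩
        have hgd : (Polynomial.X - 1 : Polynomial ℝ) ^ M ∣ g :=
          dvd_sub (hdf.mul_left _) (hfM.mul_left _)
        have hcard' : g.support.card ≤ k := by
          have h1 : g.support.card ≤ (f.support.erase e0).card := Finset.card_le_card hsub
          have h2 : (f.support.erase e0).card = f.support.card - 1 :=
            Finset.card_erase_of_mem he0
          omega
        have := ih g hcard' M hgd hg0
        have h3 : g.support.card ≤ f.support.card - 1 := by
          have h1 : g.support.card ≤ (f.support.erase e0).card := Finset.card_le_card hsub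
          rw [Finset.card_erase_of_mem he0] at h1
          exact h1
        omega
      · -- support f = {e0}; then eval 1 f = coeff e0 ≠ 0, contradicting (X-1) ∣ f
        exfalso
        have hsupp : f.support = {e0} := by
          apply Finset.eq_singleton_iff_unique_mem.mpr
          refine ⟨he0, fun x hx => ?_⟩
          by_contra hxe
          exact hne ⟨x, Finset.mem_erase.mpr ⟨hxe, hx⟩⟩
        have heval : f.eval 1 = f.coeff e0 := by
          rw [Polynomial.eval_eq_sum, Polynomial.sum_def, hsupp]
          simp
        obtain ⟨w, hw⟩ := hX1
        have : f.eval 1 = 0 := by rw [hw]; simp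
        rw [heval] at this
        exact (Polynomial.mem_support_iff.mp he0) this

/-- natDegree bound for evaluation of a homogeneous polynomial at linear polynomials. -/
lemma st9_natDegree_aeval_le (v : Fin 2 → Polynomial ℝ) (hv : ∀ i, (v i).natDegree ≤ 1)
    (p : MvPolynomial (Fin 2) ℝ) {D : ℕ} (hp : p.IsHomogeneous D) :
    (MvPolynomial.aeval v p).natDegree ≤ D := by
  rw [MvPolynomial.aeval_def, MvPolynomial.eval₂_eq]
  apply Polynomial.natDegree_sum_le_of_forall_le
  intro d hd
  have hdeg : ∑ i ∈ d.support, d i = D := by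
    have h1 := hp (MvPolynomial.mem_support_iff.mp hd)
    rw [← h1]
    simp [Finsupp.weight_apply, Finsupp.sum]
  calc (algebraMap ℝ (Polynomial ℝ) (MvPolynomial.coeff d p) * ∏ i ∈ d.support, v i ^ d i).natDegree
      ≤ (algebraMap ℝ (Polynomial ℝ) (MvPolynomial.coeff d p)).natDegree
        + (∏ i ∈ d.support, v i ^ d i).natDegree := Polynomial.natDegree_mul_le
    _ ≤ 0 + ∑ i ∈ d.support, (v i ^ d i).natDegree := by
        gcongr
        · exact le_of_eq (Polynomial.natDegree_C _)
        · exact Polynomial.natDegree_prod_le _ _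
    _ ≤ ∑ i ∈ d.support, d i := by
        rw [zero_add]
        apply Finset.sum_le_sum
        intro i _
        calc (v i ^ d i).natDegree ≤ d i * (v i).natDegree := Polynomial.natDegree_pow_le
          _ ≤ d i * 1 := Nat.mul_le_mul_left _ (hv i)
          _ = d i := Nat.mul_one _
    _ = D := hdeg

/-- Homogeneous component of a product with a homogeneous polynomial. -/
lemma st9_hc_mul {σ : Type*} (c : MvPolynomial σ ℝ) {n : ℕ} (hc : c.IsHomogeneous n)
    (D : ℕ) (p : MvPolynomial σ ℝ) :
    MvPolynomial.homogeneousComponent (D + n) (p * c)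
      = MvPolynomial.homogeneousComponent D p * c := by
  induction p using MvPolynomial.induction_on' with
  | add p q hp hq => rw [add_mul, map_add, map_add, hp, hq, add_mul]
  | monomial u a =>
    have hmon : (MvPolynomial.monomial u a).IsHomogeneous u.degree :=
      MvPolynomial.isHomogeneous_monomial _ rfl
    have hmul : ((MvPolynomial.monomial u a) * c).IsHomogeneous (u.degree + n) :=
      hmon.mul hc
    rw [MvPolynomial.homogeneousComponent_of_mem
      ((MvPolynomial.mem_homogeneousSubmodule _ _).mpr hmul),
      MvPolynomial.homogeneousComponent_of_mem
      ((MvPolynomial.mem_homogeneousSubmodule _ _).mpr hmon)]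
    by_cases h : u.degree = D
    · rw [if_pos (by omega), if_pos h.symm]
    · rw [if_neg (by omega), if_neg (fun hh => h hh.symm), zero_mul]

/-- Coefficients of elements of powers of the ideal `(C Y, X)`. -/
lemma st9_coeff_dvd (Y : MvPolynomial (Fin 2) ℝ) :
    ∀ (K : ℕ) (p : Polynomial (MvPolynomial (Fin 2) ℝ)),
      p ∈ (Ideal.span {Polynomial.C Y, Polynomial.X}) ^ K →
      ∀ j, Y ^ (K - j) ∣ p.coeff j := by
  intro K
  induction K with
  | zero => intro p _ j; simp
  | succ K ih =>
    intro p hp j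
    rw [Submodule.pow_succ] at hp
    refine Submodule.mul_induction_on hp (fun m hm q hq => ?_) (fun x y hx hy => ?_)
    ·
      obtain ⟨u, v, huv⟩ := Ideal.mem_span_pair.mp hq
      have : m * q = (m * u) * Polynomial.C Y + (m * v) * Polynomial.X := by
        rw [← huv]; ring
      rw [this, Polynomial.coeff_add, Polynomial.coeff_mul_C]
      have h1 : Y ^ (K + 1 - j) ∣ (m * u).coeff j * Y := by
        have := ih (m * u) (Ideal.mul_mem_right u _ hm) j
        calc Y ^ (K+1-j) ∣ Y ^ (K - j) * Y := by
              rw [← pow_succ]; exact pow_dvd_pow _ (by omega)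
          _ ∣ (m * u).coeff j * Y := mul_dvd_mul this dvd_rfl
      have h2 : Y ^ (K + 1 - j) ∣ ((m * v) * Polynomial.X).coeff j := by
        match j with
        | 0 => simp [Polynomial.mul_coeff_zero]
        | (j+1) =>
          rw [Polynomial.coeff_mul_X]
          have := ih (m * v) (Ideal.mul_mem_right v _ hm) j
          simpa [Nat.succ_sub_succ] using this
      exact dvd_add h1 h2
    · rw [Polynomial.coeff_add]
      exact dvd_add hx hy

/-- Evaluation of a homogeneous polynomial at a scaled point. -/
lemma st9_eval_smul {p : MvPolynomial (Fin 2) ℝ} {D : ℕ} (hp : p.IsHomogeneous D)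
    (lam : ℝ) (w : Fin 2 → ℝ) :
    MvPolynomial.eval (lam • w) p = lam ^ D * MvPolynomial.eval w p := by
  rw [MvPolynomial.eval_eq', MvPolynomial.eval_eq', Finset.mul_sum]
  apply Finset.sum_congr rfl
  intro d hd
  have hdeg : ∑ i, d i = D := by
    have h1 := hp (MvPolynomial.mem_support_iff.mp hd)
    rw [← h1]
    simp [Finsupp.weight_apply, Finsupp.sum_fintype]
  have : ∏ i, (lam • w) i ^ d i = lam ^ D * ∏ i, w i ^ d i := by
    simp only [Pi.smul_apply, smul_eq_mul, mul_pow]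
    rw [Finset.prod_mul_distrib, Finset.prod_pow_eq_pow_sum, hdeg]
  rw [this]; ring

/-- A homogeneous polynomial vanishing under `X 0 ↦ X - 1`, `X 1 ↦ X` is zero. -/
lemma st9_inj {q : MvPolynomial (Fin 2) ℝ} {D : ℕ} (hq : q.IsHomogeneous D)
    (h0 : MvPolynomial.aeval ![Polynomial.X - 1, (Polynomial.X : Polynomial ℝ)] q = 0) :
    q = 0 := by
  have heval : ∀ c : ℝ, MvPolynomial.eval ![c - 1, c] q = 0 := by
    intro c
    have hcomp : (Polynomial.aeval c).comp
        (MvPolynomial.aeval ![Polynomial.X - 1, (Polynomial.X : Polynomial ℝ)])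
        = (MvPolynomial.aeval ![c - 1, c] : MvPolynomial (Fin 2) ℝ →ₐ[ℝ] ℝ) := by
      apply MvPolynomial.algHom_ext
      intro i
      fin_cases i <;> simp
    have := congrArg (Polynomial.aeval c) h0
    rw [map_zero] at this
    have h2 : (Polynomial.aeval c).comp
        (MvPolynomial.aeval ![Polynomial.X - 1, (Polynomial.X : Polynomial ℝ)]) q = 0 := this
    rw [hcomp] at h2
    rw [show (MvPolynomial.eval ![c-1,c] q : ℝ)
      = MvPolynomial.aeval ![c-1,c] q from by
        rw [← MvPolynomial.coe_aeval_eq_eval]; rfl]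
    exact h2
  have hall : ∀ pt : Fin 2 → ℝ, MvPolynomial.eval pt (q * (MvPolynomial.X 1 - MvPolynomial.X 0)) = 0 := by
    intro pt
    rw [map_mul]
    by_cases hab : pt 1 = pt 0
    · have : MvPolynomial.eval pt (MvPolynomial.X 1 - MvPolynomial.X 0) = 0 := by
        simp [hab]
      rw [this, mul_zero]
    · have hlam : pt 1 - pt 0 ≠ 0 := sub_ne_zero_of_ne hab
      set lam := pt 1 - pt 0 with hl
      set c := pt 1 / lam with hc
      have hpt : pt = lam • ![c - 1, c] := by
        funext i
        fin_cases i
        · show pt 0 = lam * (c - 1)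
          have h : lam * c = pt 1 := by rw [hc]; field_simp
          rw [mul_sub, h, hl]; ring
        · show pt 1 = lam * c
          rw [hc]; field_simp
      rw [hpt, st9_eval_smul hq, heval c, mul_zero, zero_mul]
  have : q * (MvPolynomial.X 1 - MvPolynomial.X 0) = 0 := by
    apply MvPolynomial.funext
    intro x
    rw [hall x, map_zero]
  rcases mul_eq_zero.mp this with h | h
  · exact h
  · exfalso
    have : (MvPolynomial.X 1 : MvPolynomial (Fin 2) ℝ) ≠ MvPolynomial.X 0 := by
      intro hXX
      have := MvPolynomial.X_injective hXX
      simp at this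
    exact this (sub_eq_zero.mp h)

lemma st9_card_mul_X_pow (p : Polynomial ℝ) (n : ℕ) :
    (p * Polynomial.X ^ n).support.card ≤ p.support.card := by
  have hsub : (p * Polynomial.X ^ n).support ⊆ p.support.image (· + n) := by
    intro i hi
    rw [Polynomial.mem_support_iff, Polynomial.coeff_mul_X_pow'] at hi
    split_ifs at hi with h
    · exact Finset.mem_image.mpr ⟨i - n, Polynomial.mem_support_iff.mpr hi, by omega⟩
    · exact absurd rfl hi
  calc (p * Polynomial.X ^ n).support.card ≤ (p.support.image (· + n)).card :=
        Finset.card_le_card hsub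
    _ ≤ p.support.card := Finset.card_image_le


/-- degree bound on the smoothing cofactor `g₄₅`: if `g` is a nonzero
homogeneous polynomial with `g·y^{r+1} ∈ ⟨x^{r+1}, (x−y)^{r+1}⟩` and
`g ∈ ⟨y,z⟩^K` where `K = ⌊(r+1)/3⌋`, then `2·deg g ≥ ⌊(4r+1)/3⌋`. -/
theorem statement9 (r K : ℕ) (hKdef : K = (r + 1) / 3) (e : ℕ) (g : S3)
    (hg0 : g ≠ 0) (hge : g.IsHomogeneous e)
    (hmem : g * MvPolynomial.X 1 ^ (r + 1) ∈
      Ideal.span ({MvPolynomial.X 0 ^ (r + 1),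
        (MvPolynomial.X 0 - MvPolynomial.X 1) ^ (r + 1)} : Set S3))
    (hgK : g ∈ (Ideal.span ({MvPolynomial.X 1, MvPolynomial.X 2} : Set S3)) ^ K) :
    (4 * r + 1) / 3 ≤ 2 * e := by
  set n := r + 1 with hn
  set σp : Equiv.Perm (Fin 3) := Equiv.swap 0 2 with hσp
  set Φ : S3 ≃ₐ[ℝ] Polynomial (MvPolynomial (Fin 2) ℝ) :=
    (MvPolynomial.renameEquiv ℝ σp).trans (MvPolynomial.finSuccEquiv ℝ 2) with hΦ
  set Yv : MvPolynomial (Fin 2) ℝ := MvPolynomial.X 0 with hYv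
  set Xv : MvPolynomial (Fin 2) ℝ := MvPolynomial.X 1 with hXv
  have hΦx : Φ (MvPolynomial.X 0) = Polynomial.C Xv := by
    show (MvPolynomial.finSuccEquiv ℝ 2) (MvPolynomial.rename σp (MvPolynomial.X 0))
      = Polynomial.C Xv
    rw [MvPolynomial.rename_X]
    have : σp 0 = Fin.succ 1 := rfl
    rw [this, MvPolynomial.finSuccEquiv_X_succ]
  have hΦy : Φ (MvPolynomial.X 1) = Polynomial.C Yv := by
    show (MvPolynomial.finSuccEquiv ℝ 2) (MvPolynomial.rename σp (MvPolynomial.X 1))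
      = Polynomial.C Yv
    rw [MvPolynomial.rename_X]
    have : σp 1 = Fin.succ 0 := rfl
    rw [this, MvPolynomial.finSuccEquiv_X_succ]
  have hΦz : Φ (MvPolynomial.X 2) = Polynomial.X := by
    show (MvPolynomial.finSuccEquiv ℝ 2) (MvPolynomial.rename σp (MvPolynomial.X 2))
      = Polynomial.X
    rw [MvPolynomial.rename_X]
    have : σp 2 = 0 := rfl
    rw [this, MvPolynomial.finSuccEquiv_X_zero]
  set P : Polynomial (MvPolynomial (Fin 2) ℝ) := Φ g with hP
  have hP0 : P ≠ 0 := fun h => hg0 (Φ.injective (by rw [map_zero]; exact h))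
  have hren : (MvPolynomial.rename σp g).IsHomogeneous e := hge.rename_isHomogeneous
  have hren0 : MvPolynomial.rename σp g ≠ 0 :=
    fun h => hg0 ((MvPolynomial.renameEquiv ℝ σp).injective (by rw [MvPolynomial.renameEquiv_apply, h, map_zero]))
  have hPren : P = MvPolynomial.finSuccEquiv ℝ 2 (MvPolynomial.rename σp g) := rfl
  -- pick j in the support of P
  obtain ⟨j, hjsup⟩ := Polynomial.nonempty_support_iff.mpr hP0
  have hhj : P.coeff j ≠ 0 := Polynomial.mem_support_iff.mp hjsup
  have hje : j ≤ e := by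
    have h1 := MvPolynomial.totalDegree_coeff_finSuccEquiv_add_le
      (MvPolynomial.rename σp g) j (by rw [← hPren]; exact hhj)
    rw [hren.totalDegree hren0] at h1
    omega
  have hflat : (P.coeff j).IsHomogeneous (e - j) := by
    rw [hPren]
    exact hren.finSuccEquiv_coeff_isHomogeneous j (e - j) (by omega)
  -- transport the ideal membership
  obtain ⟨a, b, hab⟩ := Ideal.mem_span_pair.mp hmem
  have heq1 : Φ a * Polynomial.C (Xv ^ n) + Φ b * Polynomial.C ((Xv - Yv) ^ n)
      = P * Polynomial.C (Yv ^ n) := by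
    have := congrArg Φ hab
    rw [map_add, map_mul, map_mul, map_mul, map_pow, map_pow, map_pow, map_sub,
      hΦx, hΦy] at this
    rw [map_pow, map_pow, map_pow, map_sub]
    exact this
  have heq2 : (Φ a).coeff j * Xv ^ n + (Φ b).coeff j * (Xv - Yv) ^ n
      = P.coeff j * Yv ^ n := by
    have h' := congrArg (fun p => Polynomial.coeff p j) heq1
    simp only [Polynomial.coeff_add, Polynomial.coeff_mul_C] at h'
    exact h'
  -- homogeneity facts
  have hXvn : (Xv ^ n).IsHomogeneous n := by
    simpa using (MvPolynomial.isHomogeneous_X ℝ (1 : Fin 2)).pow n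
  have hYvn : (Yv ^ n).IsHomogeneous n := by
    simpa using (MvPolynomial.isHomogeneous_X ℝ (0 : Fin 2)).pow n
  have hXYv : ((Xv - Yv) ^ n).IsHomogeneous n := by
    simpa using ((MvPolynomial.isHomogeneous_X ℝ (1 : Fin 2)).sub
      (MvPolynomial.isHomogeneous_X ℝ (0 : Fin 2))).pow n
  set a₁ := MvPolynomial.homogeneousComponent (e - j) ((Φ a).coeff j) with ha₁
  set b₁ := MvPolynomial.homogeneousComponent (e - j) ((Φ b).coeff j) with hb₁
  have heq3 : a₁ * Xv ^ n + b₁ * (Xv - Yv) ^ n = P.coeff j * Yv ^ n := by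
    have := congrArg (MvPolynomial.homogeneousComponent ((e - j) + n)) heq2
    rw [map_add, st9_hc_mul _ hXvn, st9_hc_mul _ hXYv] at this
    rw [this]
    have hmem' : P.coeff j * Yv ^ n ∈ MvPolynomial.homogeneousSubmodule (Fin 2) ℝ ((e-j)+n) :=
      (MvPolynomial.mem_homogeneousSubmodule _ _).mpr (hflat.mul hYvn)
    rw [MvPolynomial.homogeneousComponent_of_mem hmem', if_pos rfl]
  -- dehomogenize
  set ψ : MvPolynomial (Fin 2) ℝ →ₐ[ℝ] Polynomial ℝ :=
    MvPolynomial.aeval ![Polynomial.X - 1, (Polynomial.X : Polynomial ℝ)] with hψ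
  have hψY : ψ Yv = Polynomial.X - 1 := by simp [hψ, hYv]
  have hψX : ψ Xv = Polynomial.X := by simp [hψ, hXv]
  set hhat := ψ (P.coeff j) with hhhat
  set ahat := ψ a₁ with hahat
  set bhat := ψ b₁ with hbhat
  have heq4 : ahat * Polynomial.X ^ n + bhat = hhat * (Polynomial.X - 1) ^ n := by
    have := congrArg ψ heq3
    rw [map_add, map_mul, map_mul, map_mul, map_pow, map_pow, map_pow, map_sub,
      hψY, hψX] at this
    simpa using this
  have hhat0 : hhat ≠ 0 := fun h => hhj (st9_inj hflat h)
  have hX1 : (Polynomial.X - 1 : Polynomial ℝ) ≠ 0 := by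
    rw [show (1 : Polynomial ℝ) = Polynomial.C 1 from (Polynomial.C_1).symm]
    exact (Polynomial.monic_X_sub_C (1:ℝ)).ne_zero
  set f := hhat * (Polynomial.X - 1) ^ n with hf
  have hf0 : f ≠ 0 := mul_ne_zero hhat0 (pow_ne_zero _ hX1)
  -- divisibility from the power ideal condition
  set t := K - j with ht
  have hdvdh : (Polynomial.X - 1 : Polynomial ℝ) ^ t ∣ hhat := by
    have hmap : P ∈ (Ideal.span ({Polynomial.C Yv, Polynomial.X} :
        Set (Polynomial (MvPolynomial (Fin 2) ℝ)))) ^ K := by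
      have h1 : P ∈ Ideal.map (Φ : S3 →+* Polynomial (MvPolynomial (Fin 2) ℝ))
          ((Ideal.span ({MvPolynomial.X 1, MvPolynomial.X 2} : Set S3)) ^ K) :=
        Ideal.mem_map_of_mem _ hgK
      rw [Ideal.map_pow, Ideal.map_span, Set.image_insert_eq, Set.image_singleton] at h1
      simpa [hΦy, hΦz] using h1
    obtain ⟨w, hw⟩ := st9_coeff_dvd Yv K P hmap j
    refine ⟨ψ w, ?_⟩
    rw [hhhat, hw, map_mul, map_pow, hψY]
  have hdvdf : (Polynomial.X - 1 : Polynomial ℝ) ^ (n + t) ∣ f := by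
    rw [pow_add, hf, mul_comm hhat]
    exact mul_dvd_mul dvd_rfl hdvdh
  -- degree bounds
  have hvdeg : ∀ i : Fin 2, (![Polynomial.X - 1, (Polynomial.X : Polynomial ℝ)] i).natDegree ≤ 1 := by
    intro i
    fin_cases i
    · simpa using (Polynomial.natDegree_sub_le _ _).trans (by simp)
    · simp
  have hadeg : ahat.natDegree ≤ e - j :=
    st9_natDegree_aeval_le _ hvdeg _ (MvPolynomial.homogeneousComponent_isHomogeneous _ _)
  have hbdeg : bhat.natDegree ≤ e - j :=
    st9_natDegree_aeval_le _ hvdeg _ (MvPolynomial.homogeneousComponent_isHomogeneous _ _)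
  have hhdeg : hhat.natDegree ≤ e - j := st9_natDegree_aeval_le _ hvdeg _ hflat
  have htle : t ≤ e - j := by
    have h1 := Polynomial.natDegree_le_of_dvd hdvdh hhat0
    have h2 : ((Polynomial.X - 1 : Polynomial ℝ) ^ t).natDegree = t := by
      rw [show (1 : Polynomial ℝ) = Polynomial.C 1 from (Polynomial.C_1).symm,
        (Polynomial.monic_X_sub_C (1:ℝ)).natDegree_pow,
        Polynomial.natDegree_X_sub_C, mul_one]
    omega
  -- support card bound
  have hcard : f.support.card ≤ 2 * (e - j) + 2 := by
    have h0 : f = ahat * Polynomial.X ^ n + bhat := heq4.symm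
    calc f.support.card ≤ ((ahat * Polynomial.X ^ n).support ∪ bhat.support).card := by
          rw [h0]; exact Finset.card_le_card Polynomial.support_add
      _ ≤ (ahat * Polynomial.X ^ n).support.card + bhat.support.card :=
          Finset.card_union_le _ _
      _ ≤ ahat.support.card + bhat.support.card := by
          have := st9_card_mul_X_pow ahat n
          omega
      _ ≤ (ahat.natDegree + 1) + (bhat.natDegree + 1) := by
          have := Polynomial.card_supp_le_succ_natDegree ahat
          have := Polynomial.card_supp_le_succ_natDegree bhat
          omega
      _ ≤ 2 * (e - j) + 2 := by omega
  have hkey := st9_key f.support.card f le_rfl (n + t) hdvdf hf0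
  omega

end
end

section
/- Let ℓ_1,…,ℓ_k be pairwise non-proportional nonzero linear forms in S = ℝ[x,y,z] with dual points X = (p_1,…,p_k), and let d > r ≥ 0 be integers. If d < α̂(X)·(d − r), then every homogeneous polynomial of degree d belongs to the ideal ⟨ℓ_1^{r+1},…,ℓ_k^{r+1}⟩. -/
open MvPolynomial

noncomputable section

namespace Stmt12

open Finset

/-- Factorial weight `∏ i (α i)!` as a real number. -/
def fac (α : Fin 3 →₀ ℕ) : ℝ := ∏ i, (Nat.factorial (α i) : ℝ)

lemma fac_zero : fac 0 = 1 := by simp [fac]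

lemma fac_add_single (β : Fin 3 →₀ ℕ) (i : Fin 3) :
    fac (β + Finsupp.single i 1) = ((β i : ℝ) + 1) * fac β := by
  classical
  unfold fac
  have h : ∀ j : Fin 3, (Nat.factorial ((β + Finsupp.single i 1 : Fin 3 →₀ ℕ) j) : ℝ)
      = (Nat.factorial (β j) : ℝ) * (if j = i then (β i : ℝ) + 1 else 1) := by
    intro j
    by_cases hj : j = i
    · subst hj
      have hv : (β + Finsupp.single j 1 : Fin 3 →₀ ℕ) j = β j + 1 := by
        rw [Finsupp.add_apply, Finsupp.single_apply, if_pos rfl]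
      rw [hv, if_pos rfl, Nat.factorial_succ]
      push_cast; ring
    · have hv : (β + Finsupp.single i 1 : Fin 3 →₀ ℕ) j = β j := by
        rw [Finsupp.add_apply, Finsupp.single_apply, if_neg (fun hh => hj hh.symm), add_zero]
      rw [hv, if_neg hj, mul_one]
  calc (∏ j, (Nat.factorial ((β + Finsupp.single i 1 : Fin 3 →₀ ℕ) j) : ℝ))
      = ∏ j, ((Nat.factorial (β j) : ℝ) * (if j = i then (β i : ℝ) + 1 else 1)) :=
        Finset.prod_congr rfl fun j _ => h j
    _ = (∏ j, (Nat.factorial (β j) : ℝ)) * ∏ j, (if j = i then (β i : ℝ) + 1 else 1) :=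
        Finset.prod_mul_distrib
    _ = ((β i : ℝ) + 1) * ∏ j, (Nat.factorial (β j) : ℝ) := by
        rw [Finset.prod_ite_eq' Finset.univ i (fun _ => (β i : ℝ) + 1)]
        simp [mul_comm]

/-- The apolar-type pairing. -/
def B (F G : S3) : ℝ := ∑ α ∈ F.support, fac α * F.coeff α * G.coeff α

lemma B_eq_sum (F G : S3) {t : Finset (Fin 3 →₀ ℕ)} (ht : F.support ⊆ t) :
    B F G = ∑ α ∈ t, fac α * F.coeff α * G.coeff α :=
  Finset.sum_subset ht fun x _ hx => by
    rw [MvPolynomial.notMem_support_iff.mp hx]; ring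

lemma B_add_left (F₁ F₂ G : S3) : B (F₁ + F₂) G = B F₁ G + B F₂ G := by
  classical
  rw [B_eq_sum (F₁ + F₂) G (MvPolynomial.support_add),
    B_eq_sum F₁ G (Finset.subset_union_left (s₂ := F₂.support)),
    B_eq_sum F₂ G (Finset.subset_union_right (s₁ := F₁.support)),
    ← Finset.sum_add_distrib]
  exact Finset.sum_congr rfl fun α _ => by rw [MvPolynomial.coeff_add]; ring

lemma B_smul_left (c : ℝ) (F G : S3) : B (c • F) G = c * B F G := by
  rw [B_eq_sum (c • F) G (MvPolynomial.support_smul)]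
  unfold B
  rw [Finset.mul_sum]
  exact Finset.sum_congr rfl fun α _ => by
    rw [MvPolynomial.coeff_smul]; simp only [smul_eq_mul]; ring

lemma B_add_right (F G₁ G₂ : S3) : B F (G₁ + G₂) = B F G₁ + B F G₂ := by
  unfold B
  rw [← Finset.sum_add_distrib]
  exact Finset.sum_congr rfl fun α _ => by rw [MvPolynomial.coeff_add]; ring

lemma B_smul_right (c : ℝ) (F G : S3) : B F (c • G) = c * B F G := by
  unfold B
  rw [Finset.mul_sum]
  exact Finset.sum_congr rfl fun α _ => by
    rw [MvPolynomial.coeff_smul]; simp only [smul_eq_mul]; ring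

/-- The pairing as a bilinear map. -/
def Bl : S3 →ₗ[ℝ] S3 →ₗ[ℝ] ℝ :=
  LinearMap.mk₂ ℝ B B_add_left B_smul_left B_add_right B_smul_right

lemma Bl_apply (F G : S3) : Bl F G = B F G := rfl

lemma B_monomial_left (β : Fin 3 →₀ ℕ) (b : ℝ) (G : S3) :
    B (monomial β b) G = fac β * b * G.coeff β := by
  classical
  rw [B_eq_sum _ G (MvPolynomial.support_monomial_subset), Finset.sum_singleton]
  simp [MvPolynomial.coeff_monomial]

lemma B_mul_X (F G : S3) (i : Fin 3) :
    B (F * X i) G = B F (pderiv i G) := by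
  classical
  induction F using MvPolynomial.induction_on' with
  | add F₁ F₂ ih₁ ih₂ =>
    rw [add_mul, B_add_left, B_add_left, ih₁, ih₂]
  | monomial β b =>
    induction G using MvPolynomial.induction_on' with
    | add G₁ G₂ ih₁ ih₂ => rw [map_add, B_add_right, B_add_right, ih₁, ih₂]
    | monomial γ c =>
      have hmul : (monomial β b : S3) * X i = monomial (β + Finsupp.single i 1) b := by
        rw [MvPolynomial.X, MvPolynomial.monomial_mul, mul_one]
      rw [hmul, MvPolynomial.pderiv_monomial, B_monomial_left, B_monomial_left]
      by_cases hγ : γ = β + Finsupp.single i 1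
      · subst hγ
        have h1 : (β + Finsupp.single i 1) - Finsupp.single i 1 = β := by
          ext j
          rw [Finsupp.tsub_apply, Finsupp.add_apply]
          simp
        have h2 : (β + Finsupp.single i 1 : Fin 3 →₀ ℕ) i = β i + 1 := by
          rw [Finsupp.add_apply, Finsupp.single_apply, if_pos rfl]
        rw [h1, h2, MvPolynomial.coeff_monomial, MvPolynomial.coeff_monomial,
          if_pos rfl, if_pos rfl, fac_add_single]
        push_cast; ring
      · rw [MvPolynomial.coeff_monomial, if_neg hγ]
        by_cases hi : γ i = 0
        · simp [hi]
        · have hne : γ - Finsupp.single i 1 ≠ β := by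
            intro h
            apply hγ
            rw [← h, tsub_add_cancel_of_le
              (Finsupp.single_le_iff.mpr (Nat.one_le_iff_ne_zero.mpr hi))]
          rw [MvPolynomial.coeff_monomial, if_neg hne]
          ring

lemma diffOp_cons (i : Fin 3) (T : List (Fin 3)) (G : S3) :
    diffOp (i :: T) G = pderiv i (diffOp T G) := rfl

lemma B_mul_prodX (L : List (Fin 3)) (F G : S3) :
    B (F * (L.map X).prod) G = B F (diffOp L G) := by
  induction L generalizing F with
  | nil => simp [diffOp]
  | cons i T ih =>
    rw [diffOp_cons, ← B_mul_X, ← ih (F * X i), List.map_cons, List.prod_cons]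
    ring_nf

lemma degree_eq_sum (v : Fin 3 →₀ ℕ) : v.degree = ∑ i, v i :=
  Finset.sum_subset (Finset.subset_univ _)
    (fun x _ hx => Finsupp.notMem_support_iff.mp hx)

lemma degree_sub_single {v : Fin 3 →₀ ℕ} {i : Fin 3} (hi : v i ≠ 0) :
    (v - Finsupp.single i 1).degree + 1 = v.degree := by
  classical
  have h : ∀ j, (v - Finsupp.single i 1 : Fin 3 →₀ ℕ) j = v j - (if i = j then 1 else 0) :=
    fun j => by rw [Finsupp.tsub_apply, Finsupp.single_apply]
  rw [degree_eq_sum, degree_eq_sum, Fin.sum_univ_three, Fin.sum_univ_three,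
    h 0, h 1, h 2]
  fin_cases i <;> simp_all <;> omega

lemma isHomog_pderiv {H : S3} {n : ℕ} (i : Fin 3) (h : H.IsHomogeneous (n + 1)) :
    (pderiv i H).IsHomogeneous n := by
  classical
  rw [← H.support_sum_monomial_coeff, map_sum]
  apply MvPolynomial.IsHomogeneous.sum
  intro v hv
  rw [MvPolynomial.pderiv_monomial]
  by_cases hvi : v i = 0
  · rw [hvi]
    simp only [Nat.cast_zero, mul_zero, map_zero]
    exact MvPolynomial.isHomogeneous_zero (Fin 3) ℝ n
  · apply MvPolynomial.isHomogeneous_monomial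
    have hd : v.degree = n + 1 := by
      by_contra hne
      exact MvPolynomial.mem_support_iff.mp hv (h.coeff_eq_zero hne)
    have := degree_sub_single (v := v) (i := i) hvi
    omega

lemma isHomog_diffOp (L : List (Fin 3)) {n : ℕ} {H : S3}
    (h : H.IsHomogeneous n) (hlen : L.length ≤ n) :
    (diffOp L H).IsHomogeneous (n - L.length) := by
  induction L with
  | nil => simpa [diffOp] using h
  | cons i T ih =>
    have hT : T.length ≤ n := by simp at hlen; omega
    have hIH := ih hT
    rw [diffOp_cons]
    have heq : n - T.length = (n - (i :: T).length) + 1 := by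
      simp only [List.length_cons] at hlen ⊢; omega
    rw [heq] at hIH
    exact isHomog_pderiv i hIH

lemma euler_eval (q : Fin 3 → ℝ) {H : S3} {n : ℕ} (h : H.IsHomogeneous n) :
    ∑ i, q i * eval q (pderiv i H) = n * eval q H := by
  classical
  have key : ∀ v ∈ H.support, ∑ i, q i * eval q (pderiv i (monomial v (H.coeff v)))
      = n * eval q (monomial v (H.coeff v)) := by
    intro v hv
    have hd : v.degree = n := by
      by_contra hne
      exact MvPolynomial.mem_support_iff.mp hv (h.coeff_eq_zero hne)
    have hterm : ∀ i : Fin 3, q i * eval q (pderiv i (monomial v (H.coeff v)))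
        = (v i : ℝ) * eval q (monomial v (H.coeff v)) := by
      intro i
      rw [MvPolynomial.pderiv_monomial, MvPolynomial.eval_monomial,
        MvPolynomial.eval_monomial]
      by_cases hvi : v i = 0
      · rw [hvi]; push_cast; ring
      · have hsplit : v = (v - Finsupp.single i 1) + Finsupp.single i 1 :=
          (tsub_add_cancel_of_le
            (Finsupp.single_le_iff.mpr (Nat.one_le_iff_ne_zero.mpr hvi))).symm
        have hprod : (v.prod fun j e => q j ^ e)
            = ((v - Finsupp.single i 1).prod fun j e => q j ^ e) * q i := by
          conv_lhs => rw [hsplit]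
          rw [Finsupp.prod_add_index' (h := fun j e => q j ^ e)
            (fun a => pow_zero (q a)) (fun a b₁ b₂ => pow_add (q a) b₁ b₂),
            Finsupp.prod_single_index (h := fun j e => q j ^ e)
            (pow_zero (q i)), pow_one]
        rw [hprod]
        push_cast; ring
    rw [Finset.sum_congr rfl fun i _ => hterm i, ← Finset.sum_mul,
      ← Nat.cast_sum, ← degree_eq_sum, hd]
  calc ∑ i, q i * eval q (pderiv i H)
      = ∑ i, q i * eval q (pderiv i (∑ v ∈ H.support, monomial v (H.coeff v))) := by
        rw [H.support_sum_monomial_coeff]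
    _ = ∑ i, ∑ v ∈ H.support, q i * eval q (pderiv i (monomial v (H.coeff v))) := by
        refine Finset.sum_congr rfl fun i _ => ?_
        rw [map_sum, map_sum, Finset.mul_sum]
    _ = ∑ v ∈ H.support, ∑ i, q i * eval q (pderiv i (monomial v (H.coeff v))) :=
        Finset.sum_comm
    _ = ∑ v ∈ H.support, n * eval q (monomial v (H.coeff v)) :=
        Finset.sum_congr rfl key
    _ = n * eval q H := by
        rw [← Finset.mul_sum, ← map_sum, H.support_sum_monomial_coeff]

lemma linForm_isHomog (q : Fin 3 → ℝ) : (linForm q).IsHomogeneous 1 :=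
  MvPolynomial.IsHomogeneous.sum _ _ _
    (fun i _ => MvPolynomial.isHomogeneous_C_mul_X (q i) i)

lemma prodX_isHomog (L : List (Fin 3)) :
    ((L.map X).prod : S3).IsHomogeneous L.length := by
  induction L with
  | nil => simpa using MvPolynomial.isHomogeneous_one (Fin 3) ℝ
  | cons i T ih =>
    rw [List.map_cons, List.prod_cons]
    have h1 := (MvPolynomial.isHomogeneous_X ℝ i).mul ih
    have h2 : (i :: T).length = 1 + T.length := by simp; omega
    rw [h2]
    exact h1

lemma eval_of_homog_zero (q : Fin 3 → ℝ) {H : S3} (h : H.IsHomogeneous 0) :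
    eval q H = H.coeff 0 := by
  classical
  rw [MvPolynomial.eval_eq]
  have hsub : H.support ⊆ {0} := by
    intro v hv
    rw [Finset.mem_singleton]
    by_contra hne
    have hd : v.degree ≠ 0 := fun hd => hne ((Finsupp.degree_eq_zero_iff v).mp hd)
    exact MvPolynomial.mem_support_iff.mp hv (h.coeff_eq_zero hd)
  rw [Finset.sum_subset hsub (fun x _ hx => by
    rw [MvPolynomial.notMem_support_iff.mp hx]; ring)]
  simp

lemma B_linForm_pow (q : Fin 3 → ℝ) :
    ∀ (e : ℕ) (H : S3), H.IsHomogeneous e →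
      B (linForm q ^ e) H = (Nat.factorial e : ℝ) * eval q H
  | 0, H, hH => by
    have h1 : (1 : S3) = monomial 0 1 := by rw [← MvPolynomial.C_1, MvPolynomial.C_apply]
    rw [pow_zero, h1, B_monomial_left, fac_zero, eval_of_homog_zero q hH]
    simp
  | (e + 1), H, hH => by
    have hstep : linForm q ^ (e + 1) = ∑ i, (q i) • (linForm q ^ e * X i) := by
      rw [pow_succ, linForm, Finset.mul_sum]
      refine Finset.sum_congr rfl fun i _ => ?_
      rw [MvPolynomial.smul_eq_C_mul]; ring
    have hsum : B (linForm q ^ (e + 1)) H = ∑ i, q i * B (linForm q ^ e * X i) H := by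
      rw [hstep, ← Bl_apply, map_sum, LinearMap.sum_apply]
      refine Finset.sum_congr rfl fun i _ => ?_
      rw [map_smul, LinearMap.smul_apply, Bl_apply, smul_eq_mul]
    rw [hsum]
    have hterm : ∀ i : Fin 3, q i * B (linForm q ^ e * X i) H
        = q i * ((Nat.factorial e : ℝ) * eval q (pderiv i H)) := by
      intro i
      rw [B_mul_X, B_linForm_pow q e (pderiv i H) (isHomog_pderiv i hH)]
    rw [Finset.sum_congr rfl fun i _ => hterm i]
    have hre : ∑ i, q i * ((Nat.factorial e : ℝ) * eval q (pderiv i H))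
        = (Nat.factorial e : ℝ) * ∑ i, q i * eval q (pderiv i H) := by
      rw [Finset.mul_sum]; exact Finset.sum_congr rfl fun i _ => by ring
    rw [hre, euler_eval q hH, Nat.factorial_succ]
    push_cast; ring

lemma finiteDimensional_homog (n : ℕ) :
    FiniteDimensional ℝ (homogeneousSubmodule (Fin 3) ℝ n) :=
  Submodule.finiteDimensional_of_le
    (show homogeneousSubmodule (Fin 3) ℝ n ≤ restrictTotalDegree (Fin 3) ℝ n from
      fun F hF => (MvPolynomial.mem_restrictTotalDegree _ _ _).mpr
        ((MvPolynomial.mem_homogeneousSubmodule _ _).mp hF).totalDegree_le)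

end Stmt12

/-- for pairwise non-proportional nonzero linear forms with dual points
`X = (p 1, …, p k)` and `d > r ≥ 0`, if `d < α̂(X)·(d − r)` then every homogeneous
polynomial of degree `d` belongs to `⟨ℓ₁^{r+1}, …, ℓ_k^{r+1}⟩`. -/
theorem statement12 {k : ℕ} (p : Fin k → (Fin 3 → ℝ)) (hp : PairwiseNonProp p)
    (r d : ℕ) (hrd : r < d)
    (hW : (d : ℝ) < waldschmidt p * ((d : ℝ) - (r : ℝ))) :
    ∀ F : S3, F.IsHomogeneous d →
      F ∈ Ideal.span (Set.range fun i => linForm (p i) ^ (r + 1)) := by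
  classical
  intro F hF
  have hV : FiniteDimensional ℝ (MvPolynomial.homogeneousSubmodule (Fin 3) ℝ d) :=
    Stmt12.finiteDimensional_homog d
  set V : Submodule ℝ S3 := MvPolynomial.homogeneousSubmodule (Fin 3) ℝ d with hVdef
  set gen : Set S3 := {q | ∃ i : Fin k, ∃ h : S3,
    h.IsHomogeneous (d - r - 1) ∧ q = linForm (p i) ^ (r + 1) * h} with hgendef
  set U : Submodule ℝ S3 := Submodule.span ℝ gen with hUdef
  have hgenV : ∀ q ∈ gen, q ∈ V := by
    rintro q ⟨i, h, hh, rfl⟩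
    have hhom := ((Stmt12.linForm_isHomog (p i)).pow (r + 1)).mul hh
    have he : 1 * (r + 1) + (d - r - 1) = d := by omega
    rw [he] at hhom
    exact (MvPolynomial.mem_homogeneousSubmodule _ _).mpr hhom
  have hUV : U ≤ V := Submodule.span_le.mpr hgenV
  have hU : FiniteDimensional ℝ U := Submodule.finiteDimensional_of_le hUV
  suffices hVU : V ≤ U by
    have hFU : F ∈ U := hVU ((MvPolynomial.mem_homogeneousSubmodule _ _).mpr hF)
    have hUI : U ≤ (Ideal.span
        (Set.range fun i => linForm (p i) ^ (r + 1))).restrictScalars ℝ := by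
      apply Submodule.span_le.mpr
      rintro q ⟨i, h, hh, rfl⟩
      have hq : h * linForm (p i) ^ (r + 1)
          ∈ Ideal.span (Set.range fun i => linForm (p i) ^ (r + 1)) :=
        Ideal.mul_mem_left _ h (Ideal.subset_span ⟨i, rfl⟩)
      rw [mul_comm] at hq
      exact hq
    exact hUI hFU
  by_contra hVU
  have hUneV : U ≠ V := fun h => hVU (le_of_eq h.symm)
  set φ : V →ₗ[ℝ] (U →ₗ[ℝ] ℝ) :=
    (LinearMap.domRestrict' U) ∘ₗ Stmt12.Bl.flip ∘ₗ V.subtype with hφdef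
  have hker : LinearMap.ker φ ≠ ⊥ := by
    intro hbot
    have hinj : Function.Injective φ := LinearMap.ker_eq_bot.mp hbot
    have hfd : FiniteDimensional ℝ (U →ₗ[ℝ] ℝ) :=
      inferInstanceAs (FiniteDimensional ℝ (Module.Dual ℝ U))
    have h1 : Module.finrank ℝ V ≤ Module.finrank ℝ (U →ₗ[ℝ] ℝ) :=
      LinearMap.finrank_le_finrank_of_injective hinj
    have h2 : Module.finrank ℝ (U →ₗ[ℝ] ℝ) = Module.finrank ℝ U :=
      Subspace.dual_finrank_eq
    exact hUneV (Submodule.eq_of_le_of_finrank_le hUV (h2 ▸ h1))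
  obtain ⟨G, hGker, hGne⟩ := (Submodule.ne_bot_iff _).mp hker
  have hGS : (G : S3) ≠ 0 := fun h => hGne (Subtype.ext h)
  have hGhom : (G : S3).IsHomogeneous d :=
    (MvPolynomial.mem_homogeneousSubmodule _ _).mp G.2
  have hBzero : ∀ u ∈ U, Stmt12.B u (G : S3) = 0 := by
    intro u hu
    have h0 : φ G = 0 := LinearMap.mem_ker.mp hGker
    have := congrArg (fun (f : U →ₗ[ℝ] ℝ) => f ⟨u, hu⟩) h0
    simpa [hφdef, LinearMap.domRestrict'_apply, Stmt12.Bl_apply] using this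
  have hvan : ∀ i, VanishesToOrder (G : S3) (p i) (d - r) := by
    intro i L hL
    set e : ℕ := d - L.length with he
    have hj : L.length ≤ d - r - 1 := by omega
    have her : r + 1 ≤ e := by omega
    have hhom_h : (linForm (p i) ^ (e - (r + 1)) * (L.map X).prod).IsHomogeneous
        (d - r - 1) := by
      have hmul := ((Stmt12.linForm_isHomog (p i)).pow (e - (r + 1))).mul
        (Stmt12.prodX_isHomog L)
      have heq : 1 * (e - (r + 1)) + L.length = d - r - 1 := by omega
      rwa [heq] at hmul
    have hmem : linForm (p i) ^ (r + 1) * (linForm (p i) ^ (e - (r + 1)) * (L.map X).prod)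
        ∈ U := Submodule.subset_span ⟨i, _, hhom_h, rfl⟩
    have hB0 := hBzero _ hmem
    have hrw : linForm (p i) ^ (r + 1) * (linForm (p i) ^ (e - (r + 1)) * (L.map X).prod)
        = linForm (p i) ^ e * (L.map X).prod := by
      rw [← mul_assoc, ← pow_add]
      congr 2
      omega
    rw [hrw, Stmt12.B_mul_prodX] at hB0
    have hdh : (diffOp L (G : S3)).IsHomogeneous e :=
      Stmt12.isHomog_diffOp L hGhom (by omega)
    rw [Stmt12.B_linForm_pow (p i) e _ hdh] at hB0
    have hfac : (Nat.factorial e : ℝ) ≠ 0 := Nat.cast_ne_zero.mpr (Nat.factorial_ne_zero e)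
    exact (mul_eq_zero.mp hB0).resolve_left hfac
  have halpha : alphaDeg p (d - r) ≤ d := Nat.sInf_le ⟨(G : S3), hGS, hGhom, hvan⟩
  have hsub : ((d - r : ℕ) : ℝ) = (d : ℝ) - (r : ℝ) := by
    rw [Nat.cast_sub hrd.le]
  have hspos : (0 : ℝ) < ((d - r : ℕ) : ℝ) := by
    have : 0 < d - r := by omega
    exact_mod_cast this
  have hbdd : BddBelow {x : ℝ | ∃ s : ℕ, 1 ≤ s ∧ x = (alphaDeg p s : ℝ) / (s : ℝ)} := by
    refine ⟨0, ?_⟩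
    rintro x ⟨s, hs1, rfl⟩
    positivity
  have hw1 : waldschmidt p ≤ (alphaDeg p (d - r) : ℝ) / ((d - r : ℕ) : ℝ) :=
    csInf_le hbdd ⟨d - r, by omega, rfl⟩
  have h2 : waldschmidt p * ((d : ℝ) - (r : ℝ)) ≤ (alphaDeg p (d - r) : ℝ) := by
    rw [← hsub]
    calc waldschmidt p * ((d - r : ℕ) : ℝ)
        ≤ ((alphaDeg p (d - r) : ℝ) / ((d - r : ℕ) : ℝ)) * ((d - r : ℕ) : ℝ) :=
          mul_le_mul_of_nonneg_right hw1 hspos.le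
      _ = (alphaDeg p (d - r) : ℝ) := div_mul_cancel₀ _ (ne_of_gt hspos)
  have h3 : (alphaDeg p (d - r) : ℝ) ≤ (d : ℝ) := Nat.cast_le.mpr halpha
  exact absurd (hW.trans_le (h2.trans h3)) (lt_irrefl _)

end
end
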